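/- arXiv:0902.3592 — 8 statements merged into one kernel-verified Lean document; each statement's English description precedes it below -/
import Mathlib

section
/- Let D be an integral domain with quotient field K and let A be a nonzero fractional ideal of D. Then A is v-invertible (i.e., ((A·A⁻¹)⁻¹)⁻¹ = D, equivalently (A·A⁻¹)⁻¹ = D) if and only if (A⁻¹ : A⁻¹) = D, where A⁻¹ = (D : A) = {z ∈ K | zA ⊆ D} and (A⁻¹ : A⁻¹) = {z ∈ K | zA⁻¹ ⊆ A⁻¹}. -/
open FractionalIdeal

variable {D K : Type*} [CommRing D] [IsDomain D] [Field K] [Algebra D K] [IsFractionRing D K]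

/-- The `v`-operation: `A ↦ (A⁻¹)⁻¹`, where `A⁻¹ = (D : A) = 1 / A`. -/
noncomputable def vop (A : FractionalIdeal (nonZeroDivisors D) K) :
    FractionalIdeal (nonZeroDivisors D) K := 1 / (1 / A)

/-- `A` is `v`-invertible if `(A·A⁻¹)^v = D`. -/
noncomputable def IsVInvertible (A : FractionalIdeal (nonZeroDivisors D) K) : Prop :=
  vop (A * (1 / A)) = 1

lemma aux_one_div_ne_zero {A : FractionalIdeal (nonZeroDivisors D) K} (hA : A ≠ 0) :
    1 / A ≠ 0 := by
  have h := den_mem_inv hA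
  rw [inv_eq] at h
  intro hz
  rw [hz, mem_zero_iff] at h
  exact IsFractionRing.to_map_ne_zero_of_mem_nonZeroDivisors A.den.2 h

lemma aux_mul_one_div_ne_zero {A : FractionalIdeal (nonZeroDivisors D) K} (hA : A ≠ 0) :
    A * (1 / A) ≠ 0 := by
  have := bot_lt_mul_inv (I := A) (by simpa using hA)
  rw [inv_eq] at this
  exact fun h => by simp [h] at this

/-- Key identity: `(A·A⁻¹)⁻¹ = (A⁻¹ : A⁻¹)`. -/
lemma aux_key {A : FractionalIdeal (nonZeroDivisors D) K} (hA : A ≠ 0) :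
    1 / (A * (1 / A)) = (1 / A) / (1 / A) := by
  have h1 : (1 : FractionalIdeal (nonZeroDivisors D) K) / A ≠ 0 := aux_one_div_ne_zero hA
  have h2 : A * (1 / A) ≠ 0 := aux_mul_one_div_ne_zero hA
  apply le_antisymm
  · rw [le_div_iff_mul_le h1, le_div_iff_mul_le hA, mul_assoc]
    calc (1 / (A * (1 / A))) * ((1 / A) * A)
        = (1 / (A * (1 / A))) * (A * (1 / A)) := by ring_nf
      _ ≤ 1 := by
          rw [← le_div_iff_mul_le h2]
  · rw [le_div_iff_mul_le h2]
    calc (1 / A / (1 / A)) * (A * (1 / A))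
        = ((1 / A / (1 / A)) * (1 / A)) * A := by ring
      _ ≤ (1 / A) * A := by
          apply mul_left_mono (a := A)
          rw [← le_div_iff_mul_le h1]
      _ ≤ 1 := by rw [mul_comm]; exact mul_one_div_le_one

/-- A nonzero fractional ideal `A` is `v`-invertible iff `(A⁻¹ : A⁻¹) = D`. -/
theorem vInvertible_iff_inv_colon_inv_eq_one
    (A : FractionalIdeal (nonZeroDivisors D) K) (hA : A ≠ 0) :
    IsVInvertible A ↔ (1 / A) / (1 / A) = 1 := by
  rw [IsVInvertible, vop, ← aux_key hA]
  set C := 1 / (A * (1 / A)) with hC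
  constructor
  · intro h
    apply le_antisymm
    · have := mul_one_div_le_one (I := C)
      rwa [h, mul_one] at this
    · rw [hC, le_div_iff_mul_le (aux_mul_one_div_ne_zero hA), one_mul]
      exact mul_one_div_le_one
  · intro h
    rw [h]
    have : (1 : FractionalIdeal (nonZeroDivisors D) K)⁻¹ = 1 := inv_one
    rwa [inv_eq] at this
end

section
/- Let D be an essential domain, i.e., D = ⋂_{P ∈ Δ} D_P for some set Δ of prime ideals of D such that each localization D_P is a valuation domain. Then D is a v-domain: for every nonzero finitely generated fractional ideal F of D, (F·F⁻¹)^v = D. -/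
open FractionalIdeal

variable {D K : Type*} [CommRing D] [IsDomain D] [Field K] [Algebra D K] [IsFractionRing D K]

/-- In a finite nonempty set with a total transitive relation, there is a dominant element. -/
theorem exists_dominant_elem {α : Type*} (Rel : α → α → Prop)
    (htot : ∀ a b, Rel a b ∨ Rel b a)
    (htrans : ∀ a b c, Rel a b → Rel b c → Rel a c) :
    ∀ s : Finset α, s.Nonempty → ∃ a ∈ s, ∀ b ∈ s, Rel b a := by
  classical
  intro s
  induction s using Finset.induction_on with
  | empty => intro h; simp at h
  | @insert x t hx ih =>
    intro _
    rcases t.eq_empty_or_nonempty with rfl | ht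
    · refine ⟨x, Finset.mem_insert_self _ _, ?_⟩
      intro b hb
      have hb' : b = x := by simpa using hb
      rw [hb']
      rcases htot x x with h | h <;> exact h
    · obtain ⟨a, ha, hdom⟩ := ih ht
      rcases htot x a with h | h
      · refine ⟨a, Finset.mem_insert_of_mem ha, ?_⟩
        intro b hb
        rcases Finset.mem_insert.mp hb with rfl | hb
        · exact h
        · exact hdom b hb
      · refine ⟨x, Finset.mem_insert_self _ _, ?_⟩
        intro b hb
        rcases Finset.mem_insert.mp hb with hb' | hb
        · rw [hb']
          rcases htot x x with h' | h' <;> exact h'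
        · exact htrans b a x (hdom b hb) h

/-- An essential domain is a `v`-domain. -/
theorem essential_domain_is_vDomain {ι : Type*} (P : ι → Ideal D)
    (hP : ∀ i, (P i).IsPrime) (T : ι → Subalgebra D K)
    (hloc : ∀ i, IsLocalization (@Ideal.primeCompl D _ (P i) (hP i)) (T i))
    (hval : ∀ i, ValuationRing (T i))
    (hint : ⨅ i, T i = ⊥) :
    ∀ F : FractionalIdeal (nonZeroDivisors D) K, F ≠ 0 →
      (F : Submodule D K).FG → IsVInvertible F := by
  classical
  intro F hF hFG
  -- a nonzero element of `1 / F`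
  obtain ⟨den, hden, hdenF⟩ := F.isFractional
  have hdenK : algebraMap D K den ≠ 0 :=
    IsFractionRing.to_map_ne_zero_of_mem_nonZeroDivisors hden
  have hdenmem : algebraMap D K den ∈ (1 : FractionalIdeal (nonZeroDivisors D) K) / F := by
    rw [mem_div_iff_of_ne_zero hF]
    intro y hy
    obtain ⟨e, he⟩ := hdenF y (mem_coe.mpr hy)
    rw [Algebra.smul_def] at he
    exact (mem_one_iff _).mpr ⟨e, he⟩
  -- a nonzero element of `F`
  obtain ⟨a0, ha0ne, ha0F⟩ := exists_ne_zero_mem_isInteger hF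
  have ha0K : algebraMap D K a0 ≠ 0 :=
    IsFractionRing.to_map_ne_zero_of_mem_nonZeroDivisors
      (mem_nonZeroDivisors_of_ne_zero ha0ne)
  have hJne : F * (1 / F) ≠ 0 := by
    intro h0
    have := mul_mem_mul ha0F hdenmem
    rw [h0, mem_zero_iff] at this
    exact (mul_ne_zero ha0K hdenK) this
  -- finite generating set
  obtain ⟨s, hs⟩ := hFG
  have hdiv : (1 : FractionalIdeal (nonZeroDivisors D) K) / (F * (1 / F)) = 1 := by
    apply le_antisymm
    · intro x hx
      replace hx : x ∈ (1 : FractionalIdeal (nonZeroDivisors D) K) / (F * (1 / F)) := hx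
      rw [mem_div_iff_of_ne_zero hJne] at hx
      show x ∈ (1 : FractionalIdeal (nonZeroDivisors D) K)
      have hxbot : x ∈ (⊥ : Subalgebra D K) := by
        rw [← hint, Algebra.mem_iInf]
        intro i
        haveI := hloc i
        haveI := hval i
        -- the divisibility relation over `T i`
        have htot : ∀ u v : K,
            (∃ r : T i, u = v * (r : K)) ∨ (∃ r : T i, v = u * (r : K)) := by
          intro u v
          obtain ⟨⟨α, β⟩, hu⟩ := IsLocalization.surj (nonZeroDivisors D) u
          obtain ⟨⟨γ, δ⟩, hv⟩ := IsLocalization.surj (nonZeroDivisors D) v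
          obtain ⟨c, hc⟩ := ValuationRing.cond
            (algebraMap D (T i) (α * δ)) (algebraMap D (T i) (γ * β))
          have hβ : algebraMap D K (β : D) ≠ 0 :=
            IsFractionRing.to_map_ne_zero_of_mem_nonZeroDivisors β.2
          have hδ : algebraMap D K (δ : D) ≠ 0 :=
            IsFractionRing.to_map_ne_zero_of_mem_nonZeroDivisors δ.2
          rcases hc with h | h
          · right
            refine ⟨c, ?_⟩
            have hK := congrArg (fun t : T i => (t : K)) h
            simp only [MulMemClass.coe_mul, SubalgebraClass.coe_algebraMap, _root_.map_mul] at hK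
            apply mul_right_cancel₀ (mul_ne_zero hβ hδ)
            calc v * (algebraMap D K β * algebraMap D K δ)
                = (v * algebraMap D K δ) * algebraMap D K β := by ring
              _ = algebraMap D K γ * algebraMap D K β := by rw [hv]
              _ = algebraMap D K α * algebraMap D K δ * (c : K) := hK.symm
              _ = (u * algebraMap D K β) * algebraMap D K δ * (c : K) := by rw [hu]
              _ = u * (c : K) * (algebraMap D K β * algebraMap D K δ) := by ring
          · left
            refine ⟨c, ?_⟩
            have hK := congrArg (fun t : T i => (t : K)) h
            simp only [MulMemClass.coe_mul, SubalgebraClass.coe_algebraMap, _root_.map_mul] at hK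
            apply mul_right_cancel₀ (mul_ne_zero hβ hδ)
            calc u * (algebraMap D K β * algebraMap D K δ)
                = (u * algebraMap D K β) * algebraMap D K δ := by ring
              _ = algebraMap D K α * algebraMap D K δ := by rw [hu]
              _ = algebraMap D K γ * algebraMap D K β * (c : K) := hK.symm
              _ = (v * algebraMap D K δ) * algebraMap D K β * (c : K) := by rw [hv]
              _ = v * (c : K) * (algebraMap D K β * algebraMap D K δ) := by ring
        have htrans : ∀ u v w : K, (∃ r : T i, u = v * (r : K)) →
            (∃ r : T i, v = w * (r : K)) → (∃ r : T i, u = w * (r : K)) := by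
          rintro u v w ⟨r, hr⟩ ⟨r', hr'⟩
          exact ⟨r' * r, by rw [hr, hr']; push_cast; ring⟩
        -- s is nonempty
        have hsne : s.Nonempty := by
          rcases s.eq_empty_or_nonempty with rfl | h
          · exfalso
            apply hF
            apply coeToSubmodule_injective
            simp only [Finset.coe_empty, Submodule.span_empty] at hs
            simp [← hs]
          · exact h
        -- a dominant generator
        obtain ⟨a, has, hdom⟩ := exists_dominant_elem
          (fun u v => ∃ r : T i, u = v * (r : K)) htot htrans s hsne
        have haF : a ∈ F := by
          rw [← mem_coe, ← hs]
          exact Submodule.subset_span has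
        have hane : a ≠ 0 := by
          rintro rfl
          apply hF
          apply coeToSubmodule_injective
          show (F : Submodule D K) = ((0 : FractionalIdeal (nonZeroDivisors D) K) : Submodule D K)
          rw [← hs]
          have : (s : Set K) ⊆ {0} := by
            intro b hb
            obtain ⟨r, hr⟩ := hdom b (Finset.mem_coe.mp hb)
            simp [hr]
          rw [coe_zero]
          refine le_antisymm ?_ bot_le
          calc Submodule.span D (s : Set K) ≤ Submodule.span D {0} :=
                Submodule.span_mono this
            _ = ⊥ := by simp
        -- choose localization data for each generator
        have hchoice : ∀ b ∈ s, ∃ (r : T i) (d : D) (σ : (P i).primeCompl),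
            b = a * (r : K) ∧ r * algebraMap D (T i) (σ : D) = algebraMap D (T i) d := by
          intro b hb
          obtain ⟨r, hr⟩ := hdom b hb
          obtain ⟨⟨d, σ⟩, hdσ⟩ := IsLocalization.surj ((P i).primeCompl) r
          exact ⟨r, d, σ, hr, hdσ⟩
        choose r d σ hbr hrd using hchoice
        -- common denominator
        set sprod : D := ∏ b ∈ s.attach, (σ b.1 b.2 : D) with hsprod
        have hsprodmem : sprod ∈ (P i).primeCompl := by
          rw [hsprod]
          exact Submonoid.prod_mem _ (fun b _ => (σ b.1 b.2).2)
        set c : K := algebraMap D K sprod * a⁻¹ with hcdef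
        -- c ∈ 1 / F
        have hcmem : c ∈ (1 : FractionalIdeal (nonZeroDivisors D) K) / F := by
          rw [mem_div_iff_of_ne_zero hF]
          intro y hy
          rw [← mem_coe, ← hs] at hy
          induction hy using Submodule.span_induction with
          | mem b hbmem =>
            have hb : b ∈ s := Finset.mem_coe.mp hbmem
            have hbK : c * b = algebraMap D K sprod * (r b hb : K) := by
              rw [hcdef]
              calc algebraMap D K sprod * a⁻¹ * b
                  = algebraMap D K sprod * a⁻¹ * (a * (r b hb : K)) := by
                    exact congrArg (fun z => algebraMap D K sprod * a⁻¹ * z) (hbr b hb)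
                _ = algebraMap D K sprod * (r b hb : K) := by field_simp
            have hsplit : sprod = (σ b hb : D) * ∏ b' ∈ s.attach.erase ⟨b, hb⟩, (σ b'.1 b'.2 : D) := by
              rw [hsprod]
              exact (Finset.mul_prod_erase s.attach _ (s.mem_attach ⟨b, hb⟩)).symm
            have hrdK : (r b hb : K) * algebraMap D K (σ b hb : D) = algebraMap D K (d b hb) := by
              have hK := congrArg (fun t : T i => (t : K)) (hrd b hb)
              simpa only [MulMemClass.coe_mul, SubalgebraClass.coe_algebraMap] using hK
            have : c * b = algebraMap D K
                ((∏ b' ∈ s.attach.erase ⟨b, hb⟩, (σ b'.1 b'.2 : D)) * d b hb) := by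
              rw [hbK, hsplit, _root_.map_mul, _root_.map_mul]
              calc algebraMap D K (σ b hb : D) *
                    algebraMap D K (∏ b' ∈ s.attach.erase ⟨b, hb⟩, (σ b'.1 b'.2 : D)) * (r b hb : K)
                  = algebraMap D K (∏ b' ∈ s.attach.erase ⟨b, hb⟩, (σ b'.1 b'.2 : D)) *
                    ((r b hb : K) * algebraMap D K (σ b hb : D)) := by ring
                _ = _ := by rw [hrdK]
            rw [this]
            exact (mem_one_iff _).mpr ⟨_, rfl⟩
          | zero =>
            rw [mul_zero]
            exact (mem_one_iff _).mpr ⟨0, _root_.map_zero _⟩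
          | add y z _ _ hy hz =>
            rw [mul_add]
            rw [← mem_coe] at hy hz ⊢
            exact Submodule.add_mem _ hy hz
          | smul e y _ hy =>
            rw [← mem_coe] at hy ⊢
            rw [Algebra.smul_def, mul_left_comm, ← Algebra.smul_def]
            exact Submodule.smul_mem _ _ hy
        -- x * algebraMap sprod lands in D
        have hxa : x * (a * c) ∈ (1 : FractionalIdeal (nonZeroDivisors D) K) :=
          hx _ (mul_mem_mul haF hcmem)
        have hac : a * c = algebraMap D K sprod := by
          rw [hcdef]
          field_simp
        rw [hac] at hxa
        obtain ⟨d₀, hd₀⟩ := (mem_one_iff _).mp hxa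
        -- conclude x ∈ T i
        obtain ⟨u, hu⟩ := IsLocalization.map_units (T i) (⟨sprod, hsprodmem⟩ : (P i).primeCompl)
        have huK : ((u : T i) : K) = algebraMap D K sprod := by
          rw [hu]
          exact SubalgebraClass.coe_algebraMap _ _
        have hx_eq : x = ((algebraMap D (T i) d₀ * (↑u⁻¹ : T i) : T i) : K) := by
          have huu : ((u : T i) : K) * ((↑u⁻¹ : T i) : K) = 1 := by
            rw [← MulMemClass.coe_mul, ← Units.val_mul, mul_inv_cancel, Units.val_one,
              OneMemClass.coe_one]
          calc x = x * (((u : T i) : K) * ((↑u⁻¹ : T i) : K)) := by rw [huu, mul_one]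
            _ = (x * algebraMap D K sprod) * ((↑u⁻¹ : T i) : K) := by rw [huK]; ring
            _ = algebraMap D K d₀ * ((↑u⁻¹ : T i) : K) := by rw [hd₀]
            _ = _ := by
              rw [MulMemClass.coe_mul, SubalgebraClass.coe_algebraMap]
        rw [hx_eq]
        exact SetLike.coe_mem _
      rw [Algebra.mem_bot] at hxbot
      obtain ⟨d₀, hd₀⟩ := hxbot
      exact (mem_one_iff _).mpr ⟨d₀, hd₀⟩
    · rw [le_div_iff_mul_le hJne, one_mul]
      exact mul_one_div_le_one
  show (1 : FractionalIdeal (nonZeroDivisors D) K) / (1 / (F * (1 / F))) = 1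
  rw [hdiv, FractionalIdeal.div_one]
end

section
/- Let D be an integral domain and a, b nonzero elements of D. Then D is a v-domain if and only if for all nonzero a, b ∈ D the ideal aD ∩ bD is v-invertible. -/
open FractionalIdeal

variable {D K : Type*} [CommRing D] [IsDomain D] [Field K] [Algebra D K] [IsFractionRing D K]

/-- Convenient characterization: `A` is `v`-invertible iff `(A·A⁻¹)⁻¹ = D`. -/
def VInv (A : FractionalIdeal (nonZeroDivisors D) K) : Prop :=
  1 / (A * (1 / A)) = 1

section Lemmas

variable {A B C E P : FractionalIdeal (nonZeroDivisors D) K}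

lemma vexists_ne_zero (hA : A ≠ 0) : ∃ x ∈ A, x ≠ (0 : K) := by
  by_contra h
  push_neg at h
  exact hA (eq_zero_iff.mpr h)

lemma vmul_ne_zero (hA : A ≠ 0) (hB : B ≠ 0) : A * B ≠ 0 := by
  obtain ⟨x, hx, hx0⟩ := vexists_ne_zero hA
  obtain ⟨y, hy, hy0⟩ := vexists_ne_zero hB
  intro h
  have : x * y = 0 := eq_zero_iff.mp h _ (mul_mem_mul hx hy)
  exact (mul_ne_zero hx0 hy0) this

lemma vone_div_ne_zero (hA : A ≠ 0) : 1 / A ≠ 0 := by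
  obtain ⟨d, hd, hint⟩ := A.isFractional
  have hd0 : (algebraMap D K) d ≠ 0 := by
    rw [Ne, IsFractionRing.to_map_eq_zero_iff]
    exact nonZeroDivisors.ne_zero hd
  intro h
  apply hd0
  apply eq_zero_iff.mp h
  rw [mem_div_iff_of_ne_zero hA]
  intro y hy
  obtain ⟨c, hc⟩ := hint y hy
  refine mem_one_iff _ |>.mpr ⟨c, ?_⟩
  rw [hc, Algebra.smul_def]

lemma vmul_le_mul (h1 : A ≤ B) (h2 : C ≤ E) : A * C ≤ B * E :=
  mul_le.mpr fun i hi j hj => mul_mem_mul (h1 hi) (h2 hj)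

lemma vle_vv (hA : A ≠ 0) : A ≤ 1 / (1 / A) :=
  (le_div_iff_mul_le (vone_div_ne_zero hA)).mpr mul_one_div_le_one

lemma vantitone (hA : A ≠ 0) (h : A ≤ B) : 1 / B ≤ 1 / A := by
  refine (le_div_iff_mul_le hA).mpr ?_
  calc 1 / B * A ≤ 1 / B * B := vmul_le_mul le_rfl h
    _ = B * (1 / B) := mul_comm _ _
    _ ≤ 1 := mul_one_div_le_one

lemma vtriple (hA : A ≠ 0) : 1 / (1 / (1 / A)) = 1 / A :=
  le_antisymm (vantitone hA (vle_vv hA)) (vle_vv (vone_div_ne_zero hA))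

lemma visv_iff : IsVInvertible A ↔ VInv A := by
  unfold IsVInvertible VInv vop
  by_cases hA : A = 0
  · subst hA
    rw [FractionalIdeal.div_zero, mul_zero, FractionalIdeal.div_zero, FractionalIdeal.div_zero]
  · have hX : A * (1 / A) ≠ 0 := vmul_ne_zero hA (vone_div_ne_zero hA)
    constructor
    · intro h
      have := congrArg (fun J => (1 : FractionalIdeal (nonZeroDivisors D) K) / J) h
      rw [vtriple hX] at this
      rw [this, FractionalIdeal.div_one]
    · intro h
      rw [h, FractionalIdeal.div_one]

lemma VInv.ne_zero (h : VInv A) : A ≠ 0 := by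
  rintro rfl
  unfold VInv at h
  rw [FractionalIdeal.div_zero, mul_zero, FractionalIdeal.div_zero] at h
  exact (one_ne_zero' (FractionalIdeal (nonZeroDivisors D) K)) h.symm

lemma vinv_ge (hA : A ≠ 0) :
    (1 : FractionalIdeal (nonZeroDivisors D) K) ≤ 1 / (A * (1 / A)) := by
  refine (le_div_iff_mul_le (vmul_ne_zero hA (vone_div_ne_zero hA))).mpr ?_
  rw [one_mul]
  exact mul_one_div_le_one

lemma VInv.mul (hA : VInv A) (hB : VInv B) : VInv (A * B) := by
  have hA0 := hA.ne_zero
  have hB0 := hB.ne_zero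
  have hAB0 : A * B ≠ 0 := vmul_ne_zero hA0 hB0
  have hX : A * B * (1 / (A * B)) ≠ 0 := vmul_ne_zero hAB0 (vone_div_ne_zero hAB0)
  refine le_antisymm ?_ (vinv_ge hAB0)
  intro z hz
  have h1 : spanSingleton (nonZeroDivisors D) z * (A * B * (1 / (A * B))) ≤ 1 :=
    (le_div_iff_mul_le hX).mp (spanSingleton_le_iff_mem.mpr (mem_coe.mp hz))
  have h2 : 1 / A * (1 / B) ≤ 1 / (A * B) := by
    refine (le_div_iff_mul_le hAB0).mpr ?_
    calc 1 / A * (1 / B) * (A * B) = (A * (1 / A)) * (B * (1 / B)) := by ring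
      _ ≤ 1 * 1 := vmul_le_mul mul_one_div_le_one mul_one_div_le_one
      _ = 1 := one_mul 1
  have h3 : spanSingleton (nonZeroDivisors D) z * ((A * (1 / A)) * (B * (1 / B))) ≤ 1 := by
    calc spanSingleton (nonZeroDivisors D) z * ((A * (1 / A)) * (B * (1 / B)))
        = spanSingleton (nonZeroDivisors D) z * (A * B * (1 / A * (1 / B))) := by ring
      _ ≤ spanSingleton (nonZeroDivisors D) z * (A * B * (1 / (A * B))) :=
          vmul_le_mul le_rfl (vmul_le_mul le_rfl h2)
      _ ≤ 1 := h1
  have h4 : spanSingleton (nonZeroDivisors D) z * (B * (1 / B)) ≤ 1 / (A * (1 / A)) := by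
    refine (le_div_iff_mul_le (vmul_ne_zero hA0 (vone_div_ne_zero hA0))).mpr ?_
    calc spanSingleton (nonZeroDivisors D) z * (B * (1 / B)) * (A * (1 / A))
        = spanSingleton (nonZeroDivisors D) z * ((A * (1 / A)) * (B * (1 / B))) := by ring
      _ ≤ 1 := h3
  rw [hA] at h4
  have h5 : spanSingleton (nonZeroDivisors D) z ≤ 1 / (B * (1 / B)) :=
    (le_div_iff_mul_le (vmul_ne_zero hB0 (vone_div_ne_zero hB0))).mpr h4
  rw [hB] at h5
  exact mem_coe.mpr (spanSingleton_le_iff_mem.mp h5)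

lemma VInv.of_mul (h : VInv (A * B)) : VInv A := by
  have hAB0 : A * B ≠ 0 := h.ne_zero
  have hA0 : A ≠ 0 := fun h0 => hAB0 (by rw [h0, zero_mul])
  refine le_antisymm ?_ (vinv_ge hA0)
  have hBd : B * (1 / (A * B)) ≤ 1 / A := by
    refine (le_div_iff_mul_le hA0).mpr ?_
    calc B * (1 / (A * B)) * A = A * B * (1 / (A * B)) := by ring
      _ ≤ 1 := mul_one_div_le_one
  have key : A * B * (1 / (A * B)) ≤ A * (1 / A) := by
    calc A * B * (1 / (A * B)) = A * (B * (1 / (A * B))) := by ring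
      _ ≤ A * (1 / A) := vmul_le_mul le_rfl hBd
  calc 1 / (A * (1 / A)) ≤ 1 / (A * B * (1 / (A * B))) :=
        vantitone (vmul_ne_zero hAB0 (vone_div_ne_zero hAB0)) key
    _ = 1 := h

lemma vinv_spanSingleton {x : K} (hx : x ≠ 0) :
    VInv (spanSingleton (nonZeroDivisors D) x) := by
  unfold VInv
  rw [one_div_spanSingleton, spanSingleton_mul_spanSingleton, mul_inv_cancel₀ hx,
    spanSingleton_one, FractionalIdeal.div_one]

lemma VInv.of_spanSingleton_mul {x : K} (h : VInv (spanSingleton (nonZeroDivisors D) x * A)) :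
    VInv A := by
  rw [mul_comm] at h
  exact h.of_mul

lemma vinv_spanSingleton_mul {x : K} (hx : x ≠ 0) (hA : VInv A) :
    VInv (spanSingleton (nonZeroDivisors D) x * A) :=
  (vinv_spanSingleton hx).mul hA

lemma VInv.one_div (h : VInv A) : VInv (1 / A) := by
  have hA0 := h.ne_zero
  have h10 : (1 : FractionalIdeal (nonZeroDivisors D) K) / A ≠ 0 := vone_div_ne_zero hA0
  have h110 : (1 : FractionalIdeal (nonZeroDivisors D) K) / (1 / A) ≠ 0 := vone_div_ne_zero h10
  refine le_antisymm ?_ (vinv_ge h10)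
  intro z hz
  have h1 : spanSingleton (nonZeroDivisors D) z * (1 / A * (1 / (1 / A))) ≤ 1 :=
    (le_div_iff_mul_le (vmul_ne_zero h10 h110)).mp (spanSingleton_le_iff_mem.mpr (mem_coe.mp hz))
  have h2 : spanSingleton (nonZeroDivisors D) z * (A * (1 / A)) ≤ 1 := by
    calc spanSingleton (nonZeroDivisors D) z * (A * (1 / A))
        = spanSingleton (nonZeroDivisors D) z * (1 / A * A) := by ring
      _ ≤ spanSingleton (nonZeroDivisors D) z * (1 / A * (1 / (1 / A))) :=
          vmul_le_mul le_rfl (vmul_le_mul le_rfl (vle_vv hA0))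
      _ ≤ 1 := h1
  have h3 : spanSingleton (nonZeroDivisors D) z ≤ 1 / (A * (1 / A)) :=
    (le_div_iff_mul_le (vmul_ne_zero hA0 h10)).mpr h2
  rw [h] at h3
  exact mem_coe.mpr (spanSingleton_le_iff_mem.mp h3)

lemma VInv.of_vop (h : VInv (1 / (1 / A))) : VInv A := by
  have hA0 : A ≠ 0 := by
    rintro rfl
    rw [FractionalIdeal.div_zero, FractionalIdeal.div_zero] at h
    exact h.ne_zero rfl
  have h10 : (1 : FractionalIdeal (nonZeroDivisors D) K) / A ≠ 0 := vone_div_ne_zero hA0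
  have h110 : (1 : FractionalIdeal (nonZeroDivisors D) K) / (1 / A) ≠ 0 := vone_div_ne_zero h10
  have hchar : 1 / (1 / (1 / A) * (1 / A)) = 1 := by
    have := h
    unfold VInv at this
    rwa [vtriple hA0] at this
  refine le_antisymm ?_ (vinv_ge hA0)
  intro z hz
  have h1 : spanSingleton (nonZeroDivisors D) z * (A * (1 / A)) ≤ 1 :=
    (le_div_iff_mul_le (vmul_ne_zero hA0 h10)).mp (spanSingleton_le_iff_mem.mpr (mem_coe.mp hz))
  have h2 : spanSingleton (nonZeroDivisors D) z * (1 / A) ≤ 1 / A := by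
    refine (le_div_iff_mul_le hA0).mpr ?_
    calc spanSingleton (nonZeroDivisors D) z * (1 / A) * A
        = spanSingleton (nonZeroDivisors D) z * (A * (1 / A)) := by ring
      _ ≤ 1 := h1
  have h3 : spanSingleton (nonZeroDivisors D) z * (1 / (1 / A) * (1 / A)) ≤ 1 := by
    calc spanSingleton (nonZeroDivisors D) z * (1 / (1 / A) * (1 / A))
        = spanSingleton (nonZeroDivisors D) z * (1 / A) * (1 / (1 / A)) := by ring
      _ ≤ 1 / A * (1 / (1 / A)) := vmul_le_mul h2 le_rfl
      _ ≤ 1 := mul_one_div_le_one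
  have h4 : spanSingleton (nonZeroDivisors D) z ≤ 1 / (1 / (1 / A) * (1 / A)) :=
    (le_div_iff_mul_le (vmul_ne_zero h110 h10)).mpr h3
  rw [hchar] at h4
  exact mem_coe.mpr (spanSingleton_le_iff_mem.mp h4)

lemma vadd_eq_zero_left (h : A + B = 0) : A = 0 := by
  have hle : A ≤ A + B := by rw [← sup_eq_add]; exact le_sup_left
  exact le_antisymm (h ▸ hle) (zero_le A)

lemma vadd_eq_zero_right (h : A + B = 0) : B = 0 :=
  vadd_eq_zero_left (by rwa [add_comm])

lemma vkey_identity (X Y Z : FractionalIdeal (nonZeroDivisors D) K) :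
    (Y + (Z + X)) * (X * Y + (X * Z + Y * Z)) = (Y + X) * (Z + X) * (Y + Z) := by
  have hX : X ≤ Y + X := by rw [← sup_eq_add]; exact le_sup_right
  have hZ : Z ≤ Z + X := by rw [← sup_eq_add]; exact le_sup_left
  have hY : Y ≤ Y + Z := by rw [← sup_eq_add]; exact le_sup_left
  have h2 : X * Y * Z ≤ (Y + X) * (Z + X) * (Y + Z) := by
    calc X * Y * Z = X * Z * Y := by ring
      _ ≤ (Y + X) * (Z + X) * (Y + Z) := vmul_le_mul (vmul_le_mul hX hZ) hY
  have h : (Y + X) * (Z + X) * (Y + Z) + X * Y * Z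
      = (Y + (Z + X)) * (X * Y + (X * Z + Y * Z)) := by ring
  rw [← h, ← sup_eq_add, sup_eq_left.mpr h2]

end Lemmas

lemma vcoe_listsum (l : List K) :
    (((l.map (spanSingleton (nonZeroDivisors D))).sum :
        FractionalIdeal (nonZeroDivisors D) K) : Submodule D K)
      = Submodule.span D {x : K | x ∈ l} := by
  induction l with
  | nil =>
    simp only [List.map_nil, List.sum_nil]
    rw [coe_zero]
    have : ({x : K | x ∈ ([] : List K)}) = (∅ : Set K) := by ext x; simp
    rw [this, Submodule.span_empty]
  | cons a l ih =>
    simp only [List.map_cons, List.sum_cons]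
    rw [coe_add, coe_spanSingleton]
    have : ({x : K | x ∈ a :: l}) = insert a {x : K | x ∈ l} := by ext x; simp
    rw [this, Submodule.span_insert, ← ih, Submodule.add_eq_sup]

lemma vexists_list (F : FractionalIdeal (nonZeroDivisors D) K)
    (h : (F : Submodule D K).FG) :
    ∃ l : List K, (l.map (spanSingleton (nonZeroDivisors D))).sum = F := by
  obtain ⟨s, hs⟩ := h
  refine ⟨s.toList, ?_⟩
  apply coeToSubmodule_injective
  show ((((s.toList).map (spanSingleton (nonZeroDivisors D))).sum :
      FractionalIdeal (nonZeroDivisors D) K) : Submodule D K) = (F : Submodule D K)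
  rw [vcoe_listsum, ← hs]
  congr 1
  ext x
  simp [Finset.mem_toList]

lemma vcoe_inf_span_eq (a b : D) (ha : a ≠ 0) (hb : b ≠ 0) :
    ((Ideal.span {a} ⊓ Ideal.span {b} : Ideal D) :
        FractionalIdeal (nonZeroDivisors D) K)
      = spanSingleton (nonZeroDivisors D) (algebraMap D K (a * b)) *
        (1 / (spanSingleton (nonZeroDivisors D) (algebraMap D K a) +
              spanSingleton (nonZeroDivisors D) (algebraMap D K b))) := by
  have ha' : algebraMap D K a ≠ 0 := by
    rw [Ne, IsFractionRing.to_map_eq_zero_iff]; exact ha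
  have hb' : algebraMap D K b ≠ 0 := by
    rw [Ne, IsFractionRing.to_map_eq_zero_iff]; exact hb
  set P := spanSingleton (nonZeroDivisors D) (algebraMap D K a) +
      spanSingleton (nonZeroDivisors D) (algebraMap D K b) with hPdef
  have hP : P ≠ 0 := by
    intro h
    exact (spanSingleton_ne_zero_iff.mpr ha') (vadd_eq_zero_left h)
  apply le_antisymm
  · intro p hp
    obtain ⟨y, hy, rfl⟩ := (mem_coeIdeal _).mp (mem_coe.mp hp)
    obtain ⟨u, hu⟩ := Ideal.mem_span_singleton'.mp hy.1
    obtain ⟨v, hv⟩ := Ideal.mem_span_singleton'.mp hy.2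
    refine mem_coe.mpr (mem_singleton_mul.mpr
      ⟨algebraMap D K y * ((algebraMap D K a)⁻¹ * (algebraMap D K b)⁻¹), ?_, ?_⟩)
    · rw [mem_div_iff_of_ne_zero hP]
      intro q hq
      have hq' : q ∈ (spanSingleton (nonZeroDivisors D) (algebraMap D K a) :
          Submodule D K) ⊔ (spanSingleton (nonZeroDivisors D) (algebraMap D K b) :
          Submodule D K) := by
        have := mem_coe.mpr hq
        rw [hPdef, coe_add, Submodule.add_eq_sup] at this
        exact this
      obtain ⟨q1, hq1, q2, hq2, rfl⟩ := Submodule.mem_sup.mp hq'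
      obtain ⟨c1, hc1⟩ := (mem_spanSingleton _).mp (mem_coe.mp hq1)
      obtain ⟨c2, hc2⟩ := (mem_spanSingleton _).mp (mem_coe.mp hq2)
      have hwa : algebraMap D K y * ((algebraMap D K a)⁻¹ * (algebraMap D K b)⁻¹) *
          algebraMap D K a = algebraMap D K v := by
        field_simp
        rw [← hv, _root_.map_mul]
        ring
      have hwb : algebraMap D K y * ((algebraMap D K a)⁻¹ * (algebraMap D K b)⁻¹) *
          algebraMap D K b = algebraMap D K u := by
        field_simp
        rw [← hu, _root_.map_mul]
        ring
      refine (mem_one_iff _).mpr ⟨c1 * v + c2 * u, ?_⟩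
      rw [_root_.map_add, _root_.map_mul, _root_.map_mul, ← hwa, ← hwb, ← hc1, ← hc2]
      rw [Algebra.smul_def, Algebra.smul_def]
      ring
    · field_simp
      rw [_root_.map_mul]; ring
  · intro p hp
    obtain ⟨w, hw, rfl⟩ := mem_singleton_mul.mp (mem_coe.mp hp)
    rw [mem_div_iff_of_ne_zero hP] at hw
    have hwa : w * algebraMap D K a ∈ (1 : FractionalIdeal (nonZeroDivisors D) K) := by
      refine hw _ ?_
      have : spanSingleton (nonZeroDivisors D) (algebraMap D K a) ≤ P := by
        rw [hPdef, ← sup_eq_add]; exact le_sup_left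
      exact this (mem_spanSingleton_self _ _)
    have hwb : w * algebraMap D K b ∈ (1 : FractionalIdeal (nonZeroDivisors D) K) := by
      refine hw _ ?_
      have : spanSingleton (nonZeroDivisors D) (algebraMap D K b) ≤ P := by
        rw [hPdef, ← sup_eq_add]; exact le_sup_right
      exact this (mem_spanSingleton_self _ _)
    obtain ⟨u, hu⟩ := (mem_one_iff _).mp hwa
    obtain ⟨v, hv⟩ := (mem_one_iff _).mp hwb
    have key : algebraMap D K (a * v) = algebraMap D K (a * b) * w := by
      rw [_root_.map_mul, _root_.map_mul, hv]; ring
    have key2 : a * v = b * u := by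
      apply IsFractionRing.injective D K
      rw [_root_.map_mul, _root_.map_mul, hu, hv]; ring
    refine mem_coe.mpr ((mem_coeIdeal _).mpr ⟨a * v, ⟨?_, ?_⟩, key⟩)
    · exact Ideal.mem_span_singleton'.mpr ⟨v, mul_comm v a⟩
    · exact Ideal.mem_span_singleton'.mpr ⟨u, by rw [key2]; ring⟩

lemma vpairK
    (hpairD : ∀ a b : D, a ≠ 0 → b ≠ 0 →
      VInv (spanSingleton (nonZeroDivisors D) (algebraMap D K a) +
            spanSingleton (nonZeroDivisors D) (algebraMap D K b)))
    (x y : K)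
    (hxy : spanSingleton (nonZeroDivisors D) x + spanSingleton (nonZeroDivisors D) y ≠ 0) :
    VInv (spanSingleton (nonZeroDivisors D) x + spanSingleton (nonZeroDivisors D) y) := by
  by_cases hx : x = 0
  · subst hx
    rw [spanSingleton_zero, zero_add] at hxy ⊢
    exact vinv_spanSingleton (spanSingleton_ne_zero_iff.mp hxy)
  by_cases hy : y = 0
  · subst hy
    rw [spanSingleton_zero, add_zero] at hxy ⊢
    exact vinv_spanSingleton (spanSingleton_ne_zero_iff.mp hxy)
  obtain ⟨⟨a, s⟩, hxs⟩ := IsLocalization.surj (nonZeroDivisors D) x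
  obtain ⟨⟨b, t⟩, hyt⟩ := IsLocalization.surj (nonZeroDivisors D) y
  have hs0 : (s : D) ≠ 0 := nonZeroDivisors.ne_zero s.2
  have ht0 : (t : D) ≠ 0 := nonZeroDivisors.ne_zero t.2
  have hs0' : algebraMap D K (s : D) ≠ 0 := by
    rw [Ne, IsFractionRing.to_map_eq_zero_iff]; exact hs0
  have ht0' : algebraMap D K (t : D) ≠ 0 := by
    rw [Ne, IsFractionRing.to_map_eq_zero_iff]; exact ht0
  have ha0 : a ≠ 0 := by
    rintro rfl
    rw [_root_.map_zero] at hxs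
    exact hx (by
      have := mul_eq_zero.mp hxs
      tauto)
  have hb0 : b ≠ 0 := by
    rintro rfl
    rw [_root_.map_zero] at hyt
    exact hy (by
      have := mul_eq_zero.mp hyt
      tauto)
  have key : spanSingleton (nonZeroDivisors D) x + spanSingleton (nonZeroDivisors D) y
      = spanSingleton (nonZeroDivisors D)
          ((algebraMap D K (s : D) * algebraMap D K (t : D))⁻¹) *
        (spanSingleton (nonZeroDivisors D) (algebraMap D K (a * (t : D))) +
         spanSingleton (nonZeroDivisors D) (algebraMap D K ((s : D) * b))) := by
    rw [mul_add, spanSingleton_mul_spanSingleton, spanSingleton_mul_spanSingleton]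
    congr 1
    · congr 1
      rw [_root_.map_mul]
      field_simp
      rw [← hxs]
    · congr 1
      rw [_root_.map_mul]
      field_simp
      rw [← hyt]
  rw [key]
  refine vinv_spanSingleton_mul ?_ (hpairD (a * (t : D)) ((s : D) * b)
    (mul_ne_zero ha0 ht0) (mul_ne_zero hs0 hb0))
  exact inv_ne_zero (mul_ne_zero hs0' ht0')

lemma vinv_listsum
    (hpair : ∀ x y : K,
      spanSingleton (nonZeroDivisors D) x + spanSingleton (nonZeroDivisors D) y ≠ 0 →
      VInv (spanSingleton (nonZeroDivisors D) x + spanSingleton (nonZeroDivisors D) y)) :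
    ∀ (n : ℕ) (l : List K), l.length ≤ n →
      (l.map (spanSingleton (nonZeroDivisors D))).sum ≠ 0 →
      VInv (l.map (spanSingleton (nonZeroDivisors D))).sum := by
  intro n
  induction n with
  | zero =>
    intro l hl h0
    have : l = [] := List.eq_nil_of_length_eq_zero (Nat.le_zero.mp hl)
    subst this
    simp at h0
  | succ n ih =>
    rintro (_ | ⟨x, (_ | ⟨y, (_ | ⟨z, t⟩)⟩)⟩) hl h0
    · simp at h0
    · simp only [List.map_cons, List.map_nil, List.sum_cons, List.sum_nil, add_zero] at h0 ⊢
      exact vinv_spanSingleton (spanSingleton_ne_zero_iff.mp h0)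
    · simp only [List.map_cons, List.map_nil, List.sum_cons, List.sum_nil, add_zero] at h0 ⊢
      exact hpair x y h0
    · simp only [List.map_cons, List.sum_cons] at h0 ⊢
      set X := spanSingleton (nonZeroDivisors D) z +
        ((t.map (spanSingleton (nonZeroDivisors D))).sum) with hXdef
      have hsum : ∀ w : K, (((w :: z :: t).map (spanSingleton (nonZeroDivisors D))).sum)
          = spanSingleton (nonZeroDivisors D) w + X := by
        intro w
        simp only [List.map_cons, List.sum_cons, hXdef]
      have hrec : ∀ w : K, spanSingleton (nonZeroDivisors D) w + X ≠ 0 →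
          VInv (spanSingleton (nonZeroDivisors D) w + X) := by
        intro w hw
        have hlen : (w :: z :: t).length ≤ n := by
          simp only [List.length_cons] at hl ⊢
          omega
        have h := ih (w :: z :: t) hlen (by rw [hsum w]; exact hw)
        rwa [hsum w] at h
      have hrecX : X ≠ 0 → VInv X := by
        intro hw
        have hlen : (z :: t).length ≤ n := by
          simp only [List.length_cons] at hl ⊢
          omega
        have h := ih (z :: t) hlen (by
          simp only [List.map_cons, List.sum_cons, ← hXdef]
          exact hw)
        simpa only [List.map_cons, List.sum_cons, ← hXdef] using h
      by_cases h1 : spanSingleton (nonZeroDivisors D) x + X = 0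
      · rw [vadd_eq_zero_left h1, vadd_eq_zero_right h1, zero_add, add_zero] at h0 ⊢
        exact vinv_spanSingleton (spanSingleton_ne_zero_iff.mp h0)
      · by_cases h2 : spanSingleton (nonZeroDivisors D) y + X = 0
        · rw [vadd_eq_zero_left h2, vadd_eq_zero_right h2, zero_add, add_zero] at h0 ⊢
          exact vinv_spanSingleton (spanSingleton_ne_zero_iff.mp h0)
        · by_cases h3 : spanSingleton (nonZeroDivisors D) x +
              spanSingleton (nonZeroDivisors D) y = 0
          · rw [vadd_eq_zero_left h3, vadd_eq_zero_right h3, zero_add, zero_add] at h0 ⊢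
            exact hrecX h0
          · have hXx : VInv (spanSingleton (nonZeroDivisors D) x + X) := hrec x h1
            have hYy : VInv (spanSingleton (nonZeroDivisors D) y + X) := hrec y h2
            have hxy : VInv (spanSingleton (nonZeroDivisors D) x +
                spanSingleton (nonZeroDivisors D) y) := hpair x y h3
            have hprod := (hXx.mul hYy).mul hxy
            rw [← vkey_identity X (spanSingleton (nonZeroDivisors D) x)
              (spanSingleton (nonZeroDivisors D) y)] at hprod
            exact hprod.of_mul

/-- `D` is a `v`-domain iff `aD ∩ bD` is `v`-invertible for all nonzero `a, b ∈ D`. -/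
theorem vDomain_iff_inter_principal_vInvertible :
    (∀ F : FractionalIdeal (nonZeroDivisors D) K, F ≠ 0 → (F : Submodule D K).FG →
        IsVInvertible F) ↔
      ∀ a b : D, a ≠ 0 → b ≠ 0 →
        IsVInvertible ((Ideal.span {a} ⊓ Ideal.span {b} : Ideal D) :
          FractionalIdeal (nonZeroDivisors D) K) := by
  constructor
  · intro H a b ha hb
    have ha' : algebraMap D K a ≠ 0 := by
      rw [Ne, IsFractionRing.to_map_eq_zero_iff]; exact ha
    have hc' : algebraMap D K (a * b) ≠ 0 := by
      rw [Ne, IsFractionRing.to_map_eq_zero_iff]; exact mul_ne_zero ha hb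
    set P := spanSingleton (nonZeroDivisors D) (algebraMap D K a) +
        spanSingleton (nonZeroDivisors D) (algebraMap D K b) with hPdef
    have hPne : P ≠ 0 := by
      intro h
      exact (spanSingleton_ne_zero_iff.mpr ha') (vadd_eq_zero_left h)
    have hPfg : (P : Submodule D K).FG := by
      rw [hPdef, coe_add, Submodule.add_eq_sup, coe_spanSingleton, coe_spanSingleton]
      exact Submodule.FG.sup (Submodule.fg_span_singleton _) (Submodule.fg_span_singleton _)
    have hPv : VInv P := visv_iff.mp (H P hPne hPfg)
    rw [visv_iff, vcoe_inf_span_eq a b ha hb]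
    exact vinv_spanSingleton_mul hc' hPv.one_div
  · intro H F hF hFG
    have hpairD : ∀ a b : D, a ≠ 0 → b ≠ 0 →
        VInv (spanSingleton (nonZeroDivisors D) (algebraMap D K a) +
              spanSingleton (nonZeroDivisors D) (algebraMap D K b)) := by
      intro a b ha hb
      have h1 := visv_iff.mp (H a b ha hb)
      rw [vcoe_inf_span_eq a b ha hb] at h1
      exact (h1.of_spanSingleton_mul).one_div.of_vop
    rw [visv_iff]
    obtain ⟨l, hl⟩ := vexists_list F hFG
    rw [← hl]
    exact vinv_listsum (vpairK hpairD) l.length l le_rfl (by rw [hl]; exact hF)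
end

section
/- Let D be an integral domain expressible as D = ⋂_{λ∈Λ} D_λ where each D_λ is a flat overring of D. If each D_λ is a v-domain (with respect to its own v-operation), then D is a v-domain. -/
set_option linter.unusedSectionVars false

open FractionalIdeal Pointwise TensorProduct

section Aux
variable {R L : Type*} [CommRing R] [IsDomain R] [Field L] [Algebra R L] [IsFractionRing R L]

lemma aux_one_div_ne_zero_s11 {I : FractionalIdeal (nonZeroDivisors R) L} (hI : I ≠ 0) :
    (1 : FractionalIdeal (nonZeroDivisors R) L) / I ≠ 0 := by
  have hd : algebraMap R L I.den ∈ (1 : FractionalIdeal (nonZeroDivisors R) L) / I := by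
    rw [mem_div_iff_of_ne_zero hI]
    intro y hy
    have : (I.den : R) • y ∈ I.den • (I : Submodule R L) :=
      Submodule.smul_mem_pointwise_smul y I.den _ hy
    rw [FractionalIdeal.den_mul_self_eq_num] at this
    obtain ⟨z, _, hz⟩ := this
    exact (FractionalIdeal.mem_one_iff _).2 ⟨z, by rw [← Algebra.smul_def, ← hz, Algebra.linearMap_apply]⟩
  intro h
  rw [h, FractionalIdeal.mem_zero_iff] at hd
  exact nonZeroDivisors.coe_ne_zero I.den
    ((injective_iff_map_eq_zero' _).mp (IsFractionRing.injective R L) _ |>.mp hd)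

lemma aux_le_one_div_one_div {I : FractionalIdeal (nonZeroDivisors R) L} (hI : I ≠ 0) :
    I ≤ 1 / (1 / I) := by
  rw [le_div_iff_mul_le (aux_one_div_ne_zero_s11 hI)]
  exact FractionalIdeal.mul_one_div_le_one

lemma aux_one_div_antitone {I J : FractionalIdeal (nonZeroDivisors R) L} (hI : I ≠ 0) (hJ : J ≠ 0)
    (hIJ : I ≤ J) : 1 / J ≤ 1 / I := by
  rw [le_div_iff_of_ne_zero hI]
  intro x hx y hy
  exact (mem_div_iff_of_ne_zero hJ).mp hx y (hIJ hy)

lemma aux_one_div_one_div_one_div {I : FractionalIdeal (nonZeroDivisors R) L} (hI : I ≠ 0) :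
    1 / (1 / (1 / I)) = 1 / I := by
  refine le_antisymm ?_ (aux_le_one_div_one_div (aux_one_div_ne_zero_s11 hI))
  exact aux_one_div_antitone hI (aux_one_div_ne_zero_s11 (aux_one_div_ne_zero_s11 hI))
    (aux_le_one_div_one_div hI)
end Aux

section Core
variable {D K : Type*} [CommRing D] [IsDomain D] [Field K] [Algebra D K] [IsFractionRing D K]

lemma key_tmul (Sa : Subalgebra D K) {W : Type*} [AddCommGroup W] [Module D W] [Module K W]
    [IsScalarTower D K W] (s : Sa) (w : W) :
    (s ⊗ₜ[D] w : Sa ⊗[D] W) = (1 : Sa) ⊗ₜ[D] ((s : K) • w) := by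
  obtain ⟨⟨a, d⟩, h⟩ := IsLocalization.mk'_surjective (nonZeroDivisors D) (s : K)
  replace h : IsLocalization.mk' K a d = (s : K) := h
  set e : K := IsLocalization.mk' K (1 : D) d with he
  have h1 : algebraMap D K d * e = 1 := by
    rw [he, IsLocalization.mk'_spec' K (1 : D) d, _root_.map_one]
  have h2 : (s : K) = algebraMap D K a * e := by
    rw [he, ← IsLocalization.mk'_eq_mul_mk'_one, h]
  have h3 : (d : D) • s = a • (1 : Sa) := by
    ext
    push_cast [Subalgebra.coe_smul]
    rw [Algebra.smul_def, Algebra.smul_def, mul_one, h2, ← mul_assoc, mul_comm (algebraMap D K d),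
      mul_assoc, h1, mul_one]
  calc s ⊗ₜ[D] w = s ⊗ₜ[D] ((algebraMap D K d * e) • w) := by rw [h1, one_smul]
    _ = s ⊗ₜ[D] ((d : D) • (e • w)) := by rw [mul_smul, algebraMap_smul]
    _ = ((d : D) • s) ⊗ₜ[D] (e • w) := (smul_tmul _ _ _).symm
    _ = (a • (1 : Sa)) ⊗ₜ[D] (e • w) := by rw [h3]
    _ = (1 : Sa) ⊗ₜ[D] (a • (e • w)) := smul_tmul _ _ _
    _ = (1 : Sa) ⊗ₜ[D] ((s : K) • w) := by
        rw [← algebraMap_smul K a (e • w), ← mul_smul, ← h2]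

noncomputable def mulMap (Sa : Subalgebra D K) : Sa ⊗[D] K →ₗ[D] K :=
  TensorProduct.lift ((LinearMap.mul D K).comp Sa.val.toLinearMap)

@[simp] lemma mulMap_tmul (Sa : Subalgebra D K) (s : Sa) (k : K) :
    mulMap Sa (s ⊗ₜ[D] k) = (s : K) * k := rfl

end Core

section Core2
variable {D K : Type*} [CommRing D] [IsDomain D] [Field K] [Algebra D K] [IsFractionRing D K]

set_option maxHeartbeats 1000000 in
lemma core_mem_span (Sa : Subalgebra D K) [Module.Flat D Sa] {ι : Type*} [Fintype ι] (f : ι → K) {x : K}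
    (hx : ∀ j, f j * x ∈ Sa) :
    x ∈ Submodule.span Sa ((Submodule.comap
        (LinearMap.pi fun j => LinearMap.mulLeft D (f j) : K →ₗ[D] (ι → K))
        (Submodule.pi Set.univ fun _ => (1 : Submodule D K)) : Submodule D K) : Set K) := by
  classical
  set P : Submodule D (ι → K) := Submodule.pi Set.univ fun _ => (1 : Submodule D K) with hP
  set ψ : K →ₗ[D] (ι → K) := LinearMap.pi fun j => LinearMap.mulLeft D (f j) with hψ
  set J : Submodule D K := Submodule.comap ψ P with hJ
  set φ : K →ₗ[D] ((ι → K) ⧸ P) := P.mkQ ∘ₗ ψ with hφ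
  have hker : LinearMap.ker φ = J := by rw [hφ, LinearMap.ker_comp, Submodule.ker_mkQ]
  -- step 1
  have hst : (1 : Sa) ⊗ₜ[D] (ψ x) ∈
      LinearMap.range (TensorProduct.AlgebraTensorModule.lTensor D Sa P.subtype) := by
    have hψx : ψ x = ∑ j, Pi.single j (f j * x) := by
      ext j
      simp [hψ, LinearMap.pi_apply, Finset.sum_apply, Pi.single_apply]
    rw [hψx, tmul_sum]
    refine Submodule.sum_mem _ fun j _ => ?_
    have hmem : Pi.single j (1 : K) ∈ P := by
      intro i _
      by_cases hij : i = j
      · subst hij; simp [Pi.single_apply, Submodule.one_eq_range]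
      · simp [Pi.single_apply, hij]
    have hsingle : Pi.single j (f j * x) =
        ((⟨f j * x, hx j⟩ : Sa) : K) • (Pi.single j (1 : K) : ι → K) := by
      ext i
      by_cases hij : i = j
      · subst hij; simp
      · simp [Pi.single_apply, hij]
    rw [hsingle, ← key_tmul]
    exact ⟨(⟨f j * x, hx j⟩ : Sa) ⊗ₜ[D] (⟨Pi.single j (1 : K), hmem⟩ : P), rfl⟩
  -- step 2
  have h0 : TensorProduct.AlgebraTensorModule.lTensor D Sa φ ((1 : Sa) ⊗ₜ[D] x) = 0 := by
    have e1 : TensorProduct.AlgebraTensorModule.lTensor D Sa φ ((1 : Sa) ⊗ₜ[D] x) =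
        TensorProduct.AlgebraTensorModule.lTensor D Sa P.mkQ ((1 : Sa) ⊗ₜ[D] ψ x) := by
      rw [hφ, TensorProduct.AlgebraTensorModule.lTensor_comp, LinearMap.comp_apply,
        TensorProduct.AlgebraTensorModule.lTensor_tmul]
    rw [e1]
    obtain ⟨u, hu⟩ := hst
    rw [← hu, ← LinearMap.comp_apply, ← TensorProduct.AlgebraTensorModule.lTensor_comp]
    have e2 : P.mkQ ∘ₗ P.subtype = 0 := by
      ext p; simp
    rw [e2, _root_.map_zero]
    simp only [LinearMap.zero_apply]
  -- step 3 : flatness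
  have hflat := Module.Flat.ker_lTensor_eq (S := D) (M := Sa) φ
  have hx' : (1 : Sa) ⊗ₜ[D] x ∈
      LinearMap.range (TensorProduct.AlgebraTensorModule.lTensor D Sa (LinearMap.ker φ).subtype) := by
    rw [← hflat]
    exact h0
  obtain ⟨u, hu⟩ := hx'
  -- step 4 : push down via mulMap
  have hmx : mulMap Sa ((1 : Sa) ⊗ₜ[D] x) = x := by
    rw [mulMap_tmul, OneMemClass.coe_one, one_mul]
  rw [← hmx, ← hu]
  clear hu hmx h0 hst
  induction u with
  | zero =>
      rw [LinearMap.map_zero, LinearMap.map_zero]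
      exact Submodule.zero_mem _
  | tmul s y =>
      rw [TensorProduct.AlgebraTensorModule.lTensor_tmul, mulMap_tmul]
      have hy : (y : K) ∈ J := hker ▸ y.2
      have h2 := Submodule.smul_mem (Submodule.span Sa (J : Set K)) s (Submodule.subset_span hy)
      have h3 : s • (y : K) = (s : K) * (y : K) := Algebra.smul_def s (y : K)
      rwa [h3] at h2
  | add u v hu hv =>
      rw [_root_.map_add, _root_.map_add]
      exact Submodule.add_mem _ hu hv
end Core2

section PerOverring
variable {D K : Type*} [CommRing D] [IsDomain D] [Field K] [Algebra D K] [IsFractionRing D K]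

set_option maxHeartbeats 1000000 in
lemma mem_overring_of_div (Sa : Subalgebra D K) [IsFractionRing Sa K] [Module.Flat D Sa]
    (hvS : ∀ G : FractionalIdeal (nonZeroDivisors Sa) K, G ≠ 0 → (G : Submodule Sa K).FG →
      1 / (1 / (G * (1 / G))) = 1)
    {F : FractionalIdeal (nonZeroDivisors D) K} (hF0 : F ≠ 0) (hA0 : F * (1 / F) ≠ 0)
    {s : Finset K} (hs : Submodule.span D (s : Set K) = (F : Submodule D K))
    {x : K} (hx : x ∈ (1 : FractionalIdeal (nonZeroDivisors D) K) / (F * (1 / F))) :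
    x ∈ Sa := by
  classical
  set f : {y // y ∈ s} → K := fun y => (y : K) with hf
  -- the extension Fi of F to Sa
  obtain ⟨d, hd, hdi⟩ := F.isFractional
  have hdK : algebraMap D K d ≠ 0 :=
    IsFractionRing.to_map_ne_zero_of_mem_nonZeroDivisors hd
  set a : Sa := ⟨algebraMap D K d, algebraMap_mem Sa d⟩ with ha
  have ha0 : a ∈ nonZeroDivisors Sa :=
    mem_nonZeroDivisors_of_ne_zero (fun h => hdK (congrArg Subtype.val h))
  have hfrac : IsFractional (nonZeroDivisors Sa)
      (Submodule.span Sa ((F : Submodule D K) : Set K)) := by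
    refine ⟨a, ha0, fun b hb => ?_⟩
    have hle : Submodule.span Sa ((F : Submodule D K) : Set K) ≤
        Submodule.comap (LinearMap.lsmul Sa K a) (1 : Submodule Sa K) := by
      rw [Submodule.span_le]
      intro y hy
      obtain ⟨c, hc⟩ := hdi y hy
      refine Submodule.mem_comap.mpr ?_
      rw [Submodule.mem_one]
      refine ⟨⟨algebraMap D K c, algebraMap_mem Sa c⟩, ?_⟩
      show algebraMap D K c = a • y
      rw [hc]
      show (d • y : K) = (a : K) * y
      rw [Algebra.smul_def, ha]
    have hmem := hle hb
    rw [Submodule.mem_comap, Submodule.mem_one] at hmem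
    obtain ⟨t, ht⟩ := hmem
    exact ⟨t, ht⟩
  set Fi : FractionalIdeal (nonZeroDivisors Sa) K :=
    ⟨Submodule.span Sa ((F : Submodule D K) : Set K), hfrac⟩ with hFi
  have hFival : (Fi : Submodule Sa K) = Submodule.span Sa ((F : Submodule D K) : Set K) := rfl
  have hFmem : ∀ {y : K}, y ∈ (F : Submodule D K) → y ∈ Fi := by
    intro y hy
    show y ∈ (Fi : Submodule Sa K)
    exact Submodule.subset_span hy
  have hFi0 : Fi ≠ 0 := by
    obtain ⟨c, hc0, hcF⟩ := exists_ne_zero_mem_isInteger hF0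
    intro h
    have : algebraMap D K c ∈ Fi := hFmem (by rwa [FractionalIdeal.mem_coe])
    rw [h, FractionalIdeal.mem_zero_iff] at this
    exact IsFractionRing.to_map_ne_zero_of_mem_nonZeroDivisors
      (mem_nonZeroDivisors_of_ne_zero hc0) this
  have hFiFG : (Fi : Submodule Sa K).FG := by
    refine ⟨s, ?_⟩
    rw [hFival, ← hs, Submodule.span_span_of_tower]
  have h1Fi0 : (1 : FractionalIdeal (nonZeroDivisors Sa) K) / Fi ≠ 0 := aux_one_div_ne_zero_s11 hFi0
  have hVi := hvS Fi hFi0 hFiFG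
  set B : FractionalIdeal (nonZeroDivisors Sa) K := Fi * (1 / Fi) with hB
  have hB0 : B ≠ 0 := by
    obtain ⟨c, hc0, hcF⟩ := exists_ne_zero_mem_isInteger hFi0
    obtain ⟨e, he0, heF⟩ := exists_ne_zero_mem_isInteger h1Fi0
    intro h
    have : algebraMap Sa K c * algebraMap Sa K e ∈ B := mul_mem_mul hcF heF
    rw [h, FractionalIdeal.mem_zero_iff] at this
    exact mul_ne_zero
      (IsFractionRing.to_map_ne_zero_of_mem_nonZeroDivisors (mem_nonZeroDivisors_of_ne_zero hc0))
      (IsFractionRing.to_map_ne_zero_of_mem_nonZeroDivisors (mem_nonZeroDivisors_of_ne_zero he0))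
      this
  have h1B : (1 : FractionalIdeal (nonZeroDivisors Sa) K) / B = 1 := by
    rw [← aux_one_div_one_div_one_div hB0, hVi, FractionalIdeal.div_one]
  -- x belongs to 1 / B
  have hxB : x ∈ (1 : FractionalIdeal (nonZeroDivisors Sa) K) / B := by
    rw [mem_div_iff_of_ne_zero hB0]
    intro y hy
    have hy' : y ∈ (Fi : Submodule Sa K) * ((1 / Fi : FractionalIdeal (nonZeroDivisors Sa) K) :
        Submodule Sa K) := by
      rw [← FractionalIdeal.coe_mul]
      exact hy
    refine Submodule.mul_induction_on hy' ?_ ?_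
    · intro m hm u hu
      have hu' : u ∈ (1 / Fi : FractionalIdeal (nonZeroDivisors Sa) K) := hu
      -- apply the core flatness lemma to u
      have hcore : u ∈ Submodule.span Sa ((Submodule.comap
          (LinearMap.pi fun j => LinearMap.mulLeft D (f j) : K →ₗ[D] ({y // y ∈ s} → K))
          (Submodule.pi Set.univ fun _ => (1 : Submodule D K)) : Submodule D K) : Set K) := by
        apply core_mem_span
        intro j
        have hfjF : f j ∈ (F : Submodule D K) := hs ▸ Submodule.subset_span j.2
        have hfj : f j ∈ Fi := hFmem hfjF
        have := (mem_div_iff_of_ne_zero hFi0).mp hu' (f j) hfj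
        obtain ⟨t, ht⟩ := (FractionalIdeal.mem_one_iff _).mp this
        rw [mul_comm, ← ht]
        exact SetLike.coe_mem t
      -- J is contained in 1/F over D
      set J : Submodule D K := Submodule.comap
          (LinearMap.pi fun j => LinearMap.mulLeft D (f j) : K →ₗ[D] ({y // y ∈ s} → K))
          (Submodule.pi Set.univ fun _ => (1 : Submodule D K)) with hJ
      have hJdiv : ∀ u₀ ∈ J, u₀ ∈ (1 / F : FractionalIdeal (nonZeroDivisors D) K) := by
        intro u₀ hu₀
        rw [mem_div_iff_of_ne_zero hF0]
        intro y₀ hy₀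
        have hspan : (F : Submodule D K) ≤
            Submodule.comap (LinearMap.mulLeft D u₀) (1 : Submodule D K) := by
          rw [← hs, Submodule.span_le]
          intro z hz
          have : f ⟨z, hz⟩ * u₀ ∈ (1 : Submodule D K) := by
            have := Submodule.mem_pi.mp (Submodule.mem_comap.mp hu₀) ⟨z, hz⟩ trivial
            simpa using this
          refine Submodule.mem_comap.mpr ?_
          simpa [hf, mul_comm] using this
        have h2 := hspan (FractionalIdeal.mem_coe.mpr hy₀)
        rw [Submodule.mem_comap] at h2
        have h3 : u₀ * y₀ ∈ (1 : Submodule D K) := h2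
        obtain ⟨c, hc⟩ := Submodule.mem_one.mp h3
        exact (FractionalIdeal.mem_one_iff _).mpr ⟨c, hc⟩
      have hstepB : ∀ m₀ ∈ (F : Submodule D K), ∀ u₀ ∈ J,
          x * (m₀ * u₀) ∈ (1 : Submodule Sa K) := by
        intro m₀ hm₀ u₀ hu₀
        have hAmem : m₀ * u₀ ∈ F * (1 / F) :=
          mul_mem_mul (FractionalIdeal.mem_coe.mp hm₀) (hJdiv u₀ hu₀)
        have hone := (mem_div_iff_of_ne_zero hA0).mp hx _ hAmem
        obtain ⟨c, hc⟩ := (FractionalIdeal.mem_one_iff _).mp hone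
        rw [Submodule.mem_one]
        exact ⟨⟨algebraMap D K c, algebraMap_mem Sa c⟩, hc⟩
      have hstepC : ∀ m₀ ∈ (F : Submodule D K), ∀ u' ∈ Submodule.span Sa (J : Set K),
          x * (m₀ * u') ∈ (1 : Submodule Sa K) := by
        intro m₀ hm₀ u' hu'
        have hle : Submodule.span Sa (J : Set K) ≤
            Submodule.comap (LinearMap.mulLeft Sa (x * m₀)) (1 : Submodule Sa K) := by
          rw [Submodule.span_le]
          intro u₀ hu₀
          refine Submodule.mem_comap.mpr ?_
          show (x * m₀) * u₀ ∈ _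
          rw [mul_assoc]
          exact hstepB m₀ hm₀ u₀ hu₀
        have h4 := hle hu'
        rw [Submodule.mem_comap] at h4
        rw [← mul_assoc]
        exact h4
      have hstepD : ∀ m' ∈ (Fi : Submodule Sa K), x * (m' * u) ∈ (1 : Submodule Sa K) := by
        intro m' hm'
        have hle : Submodule.span Sa ((F : Submodule D K) : Set K) ≤
            Submodule.comap (LinearMap.mulLeft Sa (x * u)) (1 : Submodule Sa K) := by
          rw [Submodule.span_le]
          intro m₀ hm₀
          refine Submodule.mem_comap.mpr ?_
          show (x * u) * m₀ ∈ _
          rw [show (x * u) * m₀ = x * (m₀ * u) by ring]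
          exact hstepC m₀ hm₀ u hcore
        have h5 := hle (hFival ▸ hm')
        rw [Submodule.mem_comap] at h5
        have h5' : (x * u) * m' ∈ (1 : Submodule Sa K) := h5
        rw [show x * (m' * u) = (x * u) * m' by ring]
        exact h5'
      have h6 := hstepD m hm
      obtain ⟨t, ht⟩ := Submodule.mem_one.mp h6
      exact (FractionalIdeal.mem_one_iff _).mpr ⟨t, ht⟩
    · intro y₁ y₂ h₁ h₂
      obtain ⟨t₁, ht₁⟩ := (FractionalIdeal.mem_one_iff _).mp h₁
      obtain ⟨t₂, ht₂⟩ := (FractionalIdeal.mem_one_iff _).mp h₂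
      refine (FractionalIdeal.mem_one_iff _).mpr ⟨t₁ + t₂, ?_⟩
      rw [_root_.map_add, ht₁, ht₂, mul_add]
  rw [h1B] at hxB
  obtain ⟨t, ht⟩ := (FractionalIdeal.mem_one_iff _).mp hxB
  rw [← ht]
  exact SetLike.coe_mem t
end PerOverring

open FractionalIdeal

variable {D K : Type*} [CommRing D] [IsDomain D] [Field K] [Algebra D K] [IsFractionRing D K]

/-- `R` is a `v`-domain: every nonzero finitely generated fractional ideal `F` satisfies
`(F·F⁻¹)^v = R`. -/
noncomputable def IsVDomain (R K : Type*) [CommRing R] [IsDomain R] [Field K] [Algebra R K]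
    [IsFractionRing R K] : Prop :=
  ∀ F : FractionalIdeal (nonZeroDivisors R) K, F ≠ 0 → (F : Submodule R K).FG →
    1 / (1 / (F * (1 / F))) = 1

/-- If `D` is an intersection of flat overrings each of which is a `v`-domain, then `D`
is a `v`-domain. -/
theorem vDomain_of_inter_flat_overrings {ι : Type*} (T : ι → Subalgebra D K)
    [∀ i, IsFractionRing (T i) K]
    (hflat : ∀ i, Module.Flat D (T i))
    (hv : ∀ i, IsVDomain (T i) K)
    (hint : ⨅ i, T i = ⊥) :
    IsVDomain D K := by
  intro F hF0 hFG
  have h1F0 : (1 : FractionalIdeal (nonZeroDivisors D) K) / F ≠ 0 := aux_one_div_ne_zero_s11 hF0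
  have hA0 : F * (1 / F) ≠ 0 := by
    obtain ⟨c, hc0, hcF⟩ := exists_ne_zero_mem_isInteger hF0
    obtain ⟨e, he0, heF⟩ := exists_ne_zero_mem_isInteger h1F0
    intro h
    have hmem : algebraMap D K c * algebraMap D K e ∈ F * (1 / F) := mul_mem_mul hcF heF
    rw [h, FractionalIdeal.mem_zero_iff] at hmem
    exact mul_ne_zero
      (IsFractionRing.to_map_ne_zero_of_mem_nonZeroDivisors (mem_nonZeroDivisors_of_ne_zero hc0))
      (IsFractionRing.to_map_ne_zero_of_mem_nonZeroDivisors (mem_nonZeroDivisors_of_ne_zero he0))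
      hmem
  obtain ⟨s, hs⟩ := hFG
  have hmain : (1 : FractionalIdeal (nonZeroDivisors D) K) / (F * (1 / F)) ≤ 1 := by
    refine SetLike.le_def.mpr fun x hx => ?_
    have hxTi : ∀ i, x ∈ T i := fun i => by
      haveI := hflat i
      exact mem_overring_of_div (T i) (hv i) hF0 hA0 hs hx
    have hbot : x ∈ (⊥ : Subalgebra D K) := hint ▸ Algebra.mem_iInf.mpr hxTi
    obtain ⟨c, hc⟩ := Algebra.mem_bot.mp hbot
    exact (FractionalIdeal.mem_one_iff _).mpr ⟨c, hc⟩
  refine le_antisymm ?_ ?_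
  · have h1A1 : (1 : FractionalIdeal (nonZeroDivisors D) K) ≤ 1 / (F * (1 / F)) := by
      rw [le_div_iff_mul_le hA0, one_mul]
      exact mul_one_div_le_one
    have h := aux_one_div_antitone (one_ne_zero' (FractionalIdeal (nonZeroDivisors D) K))
      (aux_one_div_ne_zero_s11 hA0) h1A1
    rwa [FractionalIdeal.div_one] at h
  · rw [le_div_iff_mul_le (aux_one_div_ne_zero_s11 hA0), one_mul]
    exact hmain
end

section
/- Let D be an integral domain and Δ a nonempty family of prime ideals of D such that D = ⋂_{P∈Δ} D_P. If D_P is a v-domain for each P ∈ Δ, then D is a v-domain. In particular, if D_M is a v-domain for every maximal ideal M of D, then D is a v-domain. -/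
open FractionalIdeal

variable {D K : Type*} [CommRing D] [IsDomain D] [Field K] [Algebra D K] [IsFractionRing D K]

section Helpers
set_option linter.unusedSectionVars false

variable {R L : Type*} [CommRing R] [IsDomain R] [Field L] [Algebra R L] [IsFractionRing R L]

theorem fi_zero_mem (I : FractionalIdeal (nonZeroDivisors R) L) : (0 : L) ∈ I :=
  FractionalIdeal.mem_coe.mp (Submodule.zero_mem _)

theorem fi_add_mem {I : FractionalIdeal (nonZeroDivisors R) L} {z w : L} (hz : z ∈ I)
    (hw : w ∈ I) : z + w ∈ I :=
  FractionalIdeal.mem_coe.mp (Submodule.add_mem _ (FractionalIdeal.mem_coe.mpr hz)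
    (FractionalIdeal.mem_coe.mpr hw))

theorem exists_mem_ne_zero {A : FractionalIdeal (nonZeroDivisors R) L} (hA : A ≠ 0) :
    ∃ z ∈ A, z ≠ 0 := by
  by_contra h
  push_neg at h
  exact hA (FractionalIdeal.eq_zero_iff.mpr h)

theorem my_one_div_ne_zero {A : FractionalIdeal (nonZeroDivisors R) L} (hA : A ≠ 0) :
    1 / A ≠ 0 := by
  obtain ⟨a, ha, haI⟩ := A.isFractional
  have hmem : algebraMap R L a ∈ 1 / A := by
    rw [FractionalIdeal.mem_div_iff_of_ne_zero hA]
    intro y hy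
    obtain ⟨d, hd⟩ := haI y hy
    rw [FractionalIdeal.mem_one_iff]
    exact ⟨d, by rw [hd, Algebra.smul_def]⟩
  intro h0
  rw [h0] at hmem
  have : algebraMap R L a ≠ 0 :=
    fun h => mem_nonZeroDivisors_iff_ne_zero.mp ha
      ((injective_iff_map_eq_zero _).mp (IsFractionRing.injective R L) a h)
  exact this (by simpa using hmem)

theorem fi_mul_ne_zero {A B : FractionalIdeal (nonZeroDivisors R) L} (hA : A ≠ 0) (hB : B ≠ 0) :
    A * B ≠ 0 := by
  obtain ⟨a, haA, ha0⟩ := exists_mem_ne_zero hA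
  obtain ⟨b, hbB, hb0⟩ := exists_mem_ne_zero hB
  intro h
  have := FractionalIdeal.mul_mem_mul haA hbB
  rw [h] at this
  exact mul_ne_zero ha0 hb0 (by simpa using this)

theorem le_one_div_one_div (A : FractionalIdeal (nonZeroDivisors R) L) :
    A ≤ 1 / (1 / A) := by
  by_cases hA : A = 0
  · simp [hA]
  · exact (FractionalIdeal.le_div_iff_mul_le (my_one_div_ne_zero hA)).mpr
      FractionalIdeal.mul_one_div_le_one

theorem one_div_anti {A B : FractionalIdeal (nonZeroDivisors R) L} (hA : A ≠ 0) (h : A ≤ B) :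
    1 / B ≤ 1 / A := by
  rw [FractionalIdeal.le_div_iff_mul_le hA]
  calc (1 / B) * A ≤ (1 / B) * B := mul_le_mul' le_rfl h
    _ = B * (1 / B) := mul_comm _ _
    _ ≤ 1 := FractionalIdeal.mul_one_div_le_one

theorem one_div_one_div_one_div (A : FractionalIdeal (nonZeroDivisors R) L) :
    1 / (1 / (1 / A)) = 1 / A := by
  by_cases hA : A = 0
  · simp [hA]
  · exact le_antisymm (one_div_anti hA (le_one_div_one_div A)) (le_one_div_one_div (1 / A))

end Helpers

/-- If `D = ⋂_{P ∈ Δ} D_P` for a nonempty family `Δ` of primes and each `D_P` is a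
`v`-domain, then `D` is a `v`-domain. -/
theorem vDomain_of_inter_localizations {ι : Type*} [Nonempty ι] (P : ι → Ideal D)
    (hP : ∀ i, (P i).IsPrime) (T : ι → Subalgebra D K)
    (hloc : ∀ i, IsLocalization (@Ideal.primeCompl D _ (P i) (hP i)) (T i))
    [∀ i, IsFractionRing (T i) K]
    (hv : ∀ i, IsVDomain (T i) K)
    (hint : ⨅ i, T i = ⊥) :
    IsVDomain D K := by
  intro F hF hFG
  have hFinv : (1 : FractionalIdeal (nonZeroDivisors D) K) / F ≠ 0 := my_one_div_ne_zero hF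
  have hFF : F * (1 / F) ≠ 0 := fi_mul_ne_zero hF hFinv
  suffices h : 1 / (F * (1 / F)) = 1 by rw [h, FractionalIdeal.div_one]
  refine le_antisymm ?_
    ((FractionalIdeal.le_div_iff_mul_le hFF).mpr (by rw [one_mul]; exact mul_one_div_le_one))
  intro x hx
  replace hx : x ∈ (1 : FractionalIdeal (nonZeroDivisors D) K) / (F * (1 / F)) := hx
  show x ∈ (1 : FractionalIdeal (nonZeroDivisors D) K)
  rw [FractionalIdeal.mem_div_iff_of_ne_zero hFF] at hx
  have hxbot : x ∈ (⊥ : Subalgebra D K) := by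
    rw [← hint, Algebra.mem_iInf]
    intro i
    haveI := hloc i
    -- the extension of F to a fractional ideal of T i
    have hfrac : IsFractional (nonZeroDivisors (T i))
        (Submodule.span (T i) ((F : Submodule D K) : Set K)) := by
      obtain ⟨a, ha, haI⟩ := F.isFractional
      refine ⟨algebraMap D (T i) a, ?_, ?_⟩
      · rw [mem_nonZeroDivisors_iff_ne_zero]
        intro h0
        have : algebraMap D K a = 0 := by
          rw [IsScalarTower.algebraMap_apply D (T i) K, h0, _root_.map_zero]
        exact mem_nonZeroDivisors_iff_ne_zero.mp ha
          ((injective_iff_map_eq_zero _).mp (IsFractionRing.injective D K) a this)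
      · intro b hb
        refine Submodule.span_induction ?_ ?_ ?_ ?_ hb
        · intro z hz
          obtain ⟨d, hd⟩ := haI z hz
          refine ⟨algebraMap D (T i) d, ?_⟩
          rw [← IsScalarTower.algebraMap_apply D (T i) K, hd, algebraMap_smul]
        · exact ⟨0, by rw [smul_zero]; exact (algebraMap _ _).map_zero⟩
        · intro y z _ _ hy hz
          rw [smul_add]
          exact IsLocalization.isInteger_add hy hz
        · intro t z _ hz
          rw [smul_comm]
          obtain ⟨c, hc⟩ := hz
          refine ⟨t * c, ?_⟩
          rw [_root_.map_mul, hc, ← Algebra.smul_def]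
    set G : FractionalIdeal (nonZeroDivisors (T i)) K := ⟨_, hfrac⟩ with hGdef
    have hFsubG : ∀ z ∈ F, z ∈ G := fun z hz => Submodule.subset_span hz
    have hG0 : G ≠ 0 := by
      obtain ⟨z, hzF, hz0⟩ := exists_mem_ne_zero hF
      intro h
      rw [FractionalIdeal.eq_zero_iff] at h
      exact hz0 (h z (hFsubG z hzF))
    have hGfg : (G : Submodule (T i) K).FG := by
      obtain ⟨s, hs⟩ := hFG
      refine ⟨s, ?_⟩
      show Submodule.span (T i) (s : Set K) = Submodule.span (T i) ((F : Submodule D K) : Set K)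
      rw [← hs, Submodule.span_span_of_tower]
    -- algebraMap (T i) K is the inclusion
    have halg : ∀ t : T i, algebraMap (T i) K t = (t : K) := fun t => rfl
    -- key : 1 / G is contained in the T i-span of 1 / F
    have key1 : ∀ y ∈ (1 : FractionalIdeal (nonZeroDivisors (T i)) K) / G,
        y ∈ Submodule.span (T i)
          (((1 / F : FractionalIdeal (nonZeroDivisors D) K) : Submodule D K) : Set K) := by
      intro y hy
      rw [FractionalIdeal.mem_div_iff_of_ne_zero hG0] at hy
      obtain ⟨s, hs⟩ := hFG
      -- for each generator a, find u_a ∈ primeCompl, b_a ∈ D with y * a * u_a = b_a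
      have hgen : ∀ a ∈ s, ∃ u : (P i).primeCompl, ∃ b : D,
          y * a * algebraMap D K (u : D) = algebraMap D K b := by
        intro a ha
        have haF : a ∈ F := by
          rw [← FractionalIdeal.mem_coe, ← hs]
          exact Submodule.subset_span ha
        have := hy a (hFsubG a haF)
        rw [FractionalIdeal.mem_one_iff] at this
        obtain ⟨t, ht⟩ := this
        obtain ⟨⟨b, u⟩, hu⟩ := IsLocalization.surj ((P i).primeCompl) t
        refine ⟨u, b, ?_⟩
        have := congrArg (algebraMap (T i) K) hu
        rw [_root_.map_mul, ht, ← IsScalarTower.algebraMap_apply D (T i) K,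
          ← IsScalarTower.algebraMap_apply D (T i) K] at this
        exact this
      choose u b hub using hgen
      -- the common denominator
      set u0 : (P i).primeCompl := ∏ a ∈ s.attach, u a a.2 with hu0
      have hu0y : algebraMap D K (u0 : D) * y ∈ (1 / F : FractionalIdeal (nonZeroDivisors D) K) := by
        rw [FractionalIdeal.mem_div_iff_of_ne_zero hF]
        intro z hz
        have hzspan : z ∈ Submodule.span D (s : Set K) := by rw [hs]; exact hz
        refine Submodule.span_induction ?_ ?_ ?_ ?_ hzspan
        · intro a ha
          obtain ⟨c, hc⟩ := Finset.dvd_prod_of_mem (fun p : {x // x ∈ s} => u p.1 p.2)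
            (Finset.mem_attach s ⟨a, ha⟩)
          have hc' : (u0 : D) = (u a ha : D) * (c : D) := by
            rw [hu0, hc]; rfl
          rw [FractionalIdeal.mem_one_iff]
          refine ⟨(c : D) * b a ha, ?_⟩
          rw [_root_.map_mul, ← hub a ha, hc', _root_.map_mul]
          ring
        · rw [mul_zero]
          exact fi_zero_mem _
        · intro z w _ _ hz hw
          have : algebraMap D K (u0:D) * y * (z + w) = algebraMap D K (u0:D) * y * z + algebraMap D K (u0:D) * y * w := by ring
          rw [this]
          exact fi_add_mem hz hw
        · intro d z _ hz
          have : algebraMap D K (u0:D) * y * (d • z) = d • (algebraMap D K (u0:D) * y * z) := by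
            rw [Algebra.smul_def, Algebra.smul_def]; ring
          rw [this]
          exact Submodule.smul_mem _ _ hz
      -- y = (unit inverse) • (u0 * y)
      have hunit : IsUnit (algebraMap D (T i) (u0 : D)) := IsLocalization.map_units (T i) u0
      obtain ⟨w, hw⟩ := hunit
      have : y = (↑w⁻¹ : T i) • (algebraMap D K (u0 : D) * y) := by
        rw [Algebra.smul_def, halg, ← mul_assoc]
        have : (↑(w⁻¹) : T i) * algebraMap D (T i) (u0 : D) = 1 := by
          rw [← hw]; exact w.inv_mul
        have h2 : ((↑(w⁻¹) : T i) : K) * algebraMap D K (u0 : D) = 1 := by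
          rw [IsScalarTower.algebraMap_apply D (T i) K, ← halg]
          calc algebraMap (T i) K ↑(w⁻¹) * algebraMap (T i) K (algebraMap D (T i) (u0:D))
              = algebraMap (T i) K (↑(w⁻¹) * algebraMap D (T i) (u0:D)) := (_root_.map_mul _ _ _).symm
            _ = 1 := by rw [this, _root_.map_one]
        rw [h2, one_mul]
      rw [this]
      exact Submodule.smul_mem _ _ (Submodule.subset_span hu0y)
    -- x multiplied with anything in G * (1/G) is integral over T i
    have key2 : ∀ y ∈ G * (1 / G), x * y ∈ (1 : FractionalIdeal (nonZeroDivisors (T i)) K) := by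
      intro y hy
      have hyspan : y ∈ Submodule.span (T i)
          ((((F * (1 / F) : FractionalIdeal (nonZeroDivisors D) K) : Submodule D K)) : Set K) := by
        have h1 : (↑(G * (1 / G)) : Submodule (T i) K) ≤
            Submodule.span (T i) ((F : Submodule D K) : Set K) *
            Submodule.span (T i) (((1 / F : FractionalIdeal (nonZeroDivisors D) K) : Submodule D K) : Set K) := by
          rw [FractionalIdeal.coe_mul]
          refine mul_le_mul' ?_ ?_
          · exact le_refl _
          · intro z hz
            exact key1 z hz
        have h2 := h1 hy
        rw [Submodule.span_mul_span] at h2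
        refine Submodule.span_mono ?_ h2
        rintro z ⟨f, hf, g, hg, rfl⟩
        rw [SetLike.mem_coe, FractionalIdeal.mem_coe]
        exact FractionalIdeal.mul_mem_mul hf hg
      refine Submodule.span_induction ?_ ?_ ?_ ?_ hyspan
      · intro z hz
        have := hx z hz
        rw [FractionalIdeal.mem_one_iff] at this ⊢
        obtain ⟨d, hd⟩ := this
        exact ⟨algebraMap D (T i) d, by rw [← IsScalarTower.algebraMap_apply D (T i) K, hd]⟩
      · rw [mul_zero]
        exact fi_zero_mem _
      · intro z w _ _ hz hw
        rw [mul_add]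
        exact fi_add_mem hz hw
      · intro t z _ hz
        rw [mul_smul_comm]
        exact Submodule.smul_mem _ _ hz
    -- now apply the v-domain hypothesis for T i
    have hGG : G * (1 / G) ≠ 0 := fi_mul_ne_zero hG0 (my_one_div_ne_zero hG0)
    have hvi := hv i G hG0 hGfg
    have haux := one_div_one_div_one_div (R := T i) (G * (1 / G))
    rw [hvi, FractionalIdeal.div_one] at haux
    have hxmem : x ∈ (1 : FractionalIdeal (nonZeroDivisors (T i)) K) := by
      rw [haux, FractionalIdeal.mem_div_iff_of_ne_zero hGG]
      exact key2
    rw [FractionalIdeal.mem_one_iff] at hxmem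
    obtain ⟨t, ht⟩ := hxmem
    rw [halg] at ht
    rw [← ht]
    exact t.2
  rw [Algebra.mem_bot] at hxbot
  obtain ⟨d, hd⟩ := hxbot
  rw [FractionalIdeal.mem_one_iff]
  exact ⟨d, hd⟩
end

section
/- Let D be an integral domain with quotient field K and X an indeterminate. Suppose that for a nonzero polynomial f ∈ K[X] the content ideal c(f) is v-invertible over D. Then for every nonzero g ∈ K[X], (c(fg))^v = (c(f)·c(g))^v. (Consequence of the Dedekind–Mertens lemma.) -/
open FractionalIdeal

variable {D K : Type*} [CommRing D] [IsDomain D] [Field K] [Algebra D K] [IsFractionRing D K]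

variable (D) in
/-- The content of a polynomial `f ∈ K[X]`, as a fractional ideal of `D`. -/
noncomputable def contentFI (f : Polynomial K) : FractionalIdeal (nonZeroDivisors D) K :=
  FractionalIdeal.spanFinset D (Finset.range (f.natDegree + 1)) f.coeff


namespace DMaux

set_option linter.unusedSectionVars false



variable (D) in
noncomputable def cont (p : Polynomial K) : Submodule D K :=
  Submodule.span D (Set.range p.coeff)

lemma coeff_mem_cont (p : Polynomial K) (i : ℕ) : p.coeff i ∈ cont D p :=
  Submodule.subset_span ⟨i, rfl⟩

lemma cont_le {p : Polynomial K} {N : Submodule D K} (h : ∀ i, p.coeff i ∈ N) :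
    cont D p ≤ N := by
  rw [cont, Submodule.span_le]; rintro _ ⟨i, rfl⟩; exact h i

lemma cont_mul_le (p q : Polynomial K) : cont D (p * q) ≤ cont D p * cont D q := by
  apply cont_le; intro k
  rw [Polynomial.coeff_mul]
  exact sum_mem fun x _ =>
    Submodule.mul_mem_mul (coeff_mem_cont p x.1) (coeff_mem_cont q x.2)

lemma cont_add_le (p q : Polynomial K) : cont D (p + q) ≤ cont D p ⊔ cont D q := by
  apply cont_le; intro k
  rw [Polynomial.coeff_add]
  exact Submodule.add_mem_sup (coeff_mem_cont p k) (coeff_mem_cont q k)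

lemma cont_sub_le (p q : Polynomial K) : cont D (p - q) ≤ cont D p ⊔ cont D q := by
  apply cont_le; intro k
  rw [Polynomial.coeff_sub, sub_eq_add_neg]
  exact Submodule.add_mem_sup (coeff_mem_cont p k) (neg_mem (coeff_mem_cont q k))

lemma cont_C_mul_X_pow_le (b : K) (m : ℕ) :
    cont D (Polynomial.C b * Polynomial.X ^ m) ≤ Submodule.span D {b} := by
  apply cont_le; intro k
  rw [Polynomial.coeff_C_mul, Polynomial.coeff_X_pow]
  by_cases h : k = m
  · rw [if_pos h, mul_one]
    exact Submodule.subset_span rfl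
  · rw [if_neg h, mul_zero]
    exact zero_mem _

lemma span_singleton_mul_le {b : K} {M N : Submodule D K} (h : ∀ x ∈ M, b * x ∈ N) :
    Submodule.span D {b} * M ≤ N := by
  rw [Submodule.mul_le]
  intro y hy x hx
  obtain ⟨r, rfl⟩ := Submodule.mem_span_singleton.mp hy
  rw [smul_mul_assoc]
  exact Submodule.smul_mem _ _ (h x hx)

lemma mul_mem_of_span_singleton_mul {a b : K} {M N : Submodule D K}
    (h : ∀ x ∈ M, a * (b * x) ∈ N) :
    ∀ z ∈ Submodule.span D {b} * M, a * z ∈ N := by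
  intro z hz
  refine Submodule.mul_induction_on hz ?_ ?_
  · intro y hy x hx
    obtain ⟨r, rfl⟩ := Submodule.mem_span_singleton.mp hy
    rw [smul_mul_assoc, mul_smul_comm]
    exact Submodule.smul_mem _ _ (h x hx)
  · intro x y hx hy; rw [mul_add]; exact add_mem hx hy

lemma dm (f : Polynomial K) : ∀ (m : ℕ) (g : Polynomial K), g.natDegree ≤ m →
    cont D f ^ (m + 1) * cont D g ≤ cont D f ^ m * cont D (f * g) := by
  intro m
  induction m with
  | zero =>
    intro g hg
    obtain ⟨b0, rfl⟩ : ∃ b0, g = Polynomial.C b0 :=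
      ⟨g.coeff 0, Polynomial.eq_C_of_natDegree_le_zero hg⟩
    rw [pow_one, pow_zero, one_mul, Submodule.mul_le]
    intro x hx y hy
    have hcg : cont D (Polynomial.C b0) ≤ Submodule.span D {b0} := by
      apply cont_le; intro i
      rw [Polynomial.coeff_C]
      by_cases h : i = 0
      · rw [if_pos h]; exact Submodule.subset_span rfl
      · rw [if_neg h]; exact zero_mem _
    obtain ⟨r, rfl⟩ := Submodule.mem_span_singleton.mp (hcg hy)
    rw [mul_smul_comm]
    refine Submodule.smul_mem _ _ ?_
    induction hx using Submodule.span_induction with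
    | mem x hxs =>
      obtain ⟨i, rfl⟩ := hxs
      rw [← Polynomial.coeff_mul_C]
      exact coeff_mem_cont _ i
    | zero => rw [zero_mul]; exact zero_mem _
    | add x y _ _ hx hy => rw [add_mul]; exact add_mem hx hy
    | smul r x _ hx => rw [smul_mul_assoc]; exact Submodule.smul_mem _ _ hx
  | succ m ih =>
    intro g hg
    set n := f.natDegree with hn
    set b := g.coeff (m + 1) with hb
    set g₁ := g - Polynomial.C b * Polynomial.X ^ (m + 1) with hg₁def
    have hcoeff_g₁ : ∀ t, g₁.coeff t = g.coeff t - (if t = m + 1 then b else 0) := by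
      intro t
      rw [hg₁def, Polynomial.coeff_sub, Polynomial.coeff_C_mul, Polynomial.coeff_X_pow]
      by_cases h : t = m + 1 <;> simp [h]
    have hdeg₁ : g₁.natDegree ≤ m := by
      rw [Polynomial.natDegree_le_iff_coeff_eq_zero]
      intro t ht
      rw [hcoeff_g₁]
      rcases eq_or_lt_of_le (Nat.succ_le_of_lt ht) with h | h
      · have hbt : g.coeff t = b := by rw [hb, ← h]
        rw [if_pos h.symm, hbt, sub_self]
      · rw [if_neg (by omega), Polynomial.coeff_eq_zero_of_natDegree_lt (by omega), sub_zero]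
    have hfg₁ : cont D (f * g₁) ≤ cont D (f * g) ⊔ Submodule.span D {b} * cont D f := by
      have hid : f * g₁ = f * g - Polynomial.C b * Polynomial.X ^ (m + 1) * f := by
        rw [hg₁def]; ring
      rw [hid]
      refine le_trans (cont_sub_le _ _) (sup_le_sup le_rfl ?_)
      exact le_trans (cont_mul_le _ _)
        (mul_left_mono (cont_C_mul_X_pow_le b (m + 1)))
    have ihg₁ : cont D f ^ (m + 1) * cont D g₁ ≤ cont D f ^ m * cont D (f * g₁) :=
      ih g₁ hdeg₁
    -- the inner descending induction on the coefficients of `f`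
    have inner : ∀ d i, n + 1 ≤ i + d → ∀ x ∈ cont D f ^ (m + 1),
        f.coeff i * (b * x) ∈ cont D f ^ (m + 1) * cont D (f * g) := by
      intro d
      induction d with
      | zero =>
        intro i hi x _
        rw [Polynomial.coeff_eq_zero_of_natDegree_lt (by omega), zero_mul]
        exact zero_mem _
      | succ d ihd =>
        intro i hi x hx
        by_cases hcase : n + 1 ≤ i + d
        · exact ihd i hcase x hx
        have hkey : b * f.coeff i = (f * g).coeff (i + (m + 1)) -
            ∑ t ∈ Finset.range (m + 1), g.coeff t * f.coeff (i + (m + 1) - t) := by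
          have h1 : (f * g).coeff (i + (m + 1)) =
              ∑ t ∈ Finset.range (i + (m + 1) + 1), g.coeff t * f.coeff (i + (m + 1) - t) := by
            rw [mul_comm f g, Polynomial.coeff_mul,
              Finset.Nat.sum_antidiagonal_eq_sum_range_succ_mk]
          have h2 : ∑ t ∈ Finset.range (i + (m + 1) + 1),
                g.coeff t * f.coeff (i + (m + 1) - t)
              = ∑ t ∈ Finset.range ((m + 1) + 1), g.coeff t * f.coeff (i + (m + 1) - t) := by
            symm
            apply Finset.sum_subset
            · intro t ht
              simp only [Finset.mem_range] at *
              omega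
            · intro t ht hnt
              simp only [Finset.mem_range] at ht hnt
              rw [Polynomial.coeff_eq_zero_of_natDegree_lt (p := g) (by omega), zero_mul]
          rw [h1, h2, Finset.sum_range_succ]
          simp only [Nat.add_sub_cancel, ← hb]
          ring
        have hgoal : f.coeff i * (b * x) = (f * g).coeff (i + (m + 1)) * x -
            ∑ t ∈ Finset.range (m + 1), g.coeff t * f.coeff (i + (m + 1) - t) * x := by
          rw [← Finset.sum_mul, ← sub_mul, ← hkey]; ring
        rw [hgoal]
        refine sub_mem ?_ (sum_mem fun t ht => ?_)
        · rw [mul_comm ((f * g).coeff (i + (m + 1))) x]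
          exact Submodule.mul_mem_mul hx (coeff_mem_cont _ _)
        · simp only [Finset.mem_range] at ht
          have hbt : g.coeff t = g₁.coeff t := by
            rw [hcoeff_g₁, if_neg (by omega), sub_zero]
          have hmem1 : x * g₁.coeff t ∈ cont D f ^ m * cont D (f * g₁) :=
            ihg₁ (Submodule.mul_mem_mul hx (coeff_mem_cont _ _))
          have hle2 : cont D f ^ m * cont D (f * g₁) ≤ cont D f ^ m * cont D (f * g) ⊔
              Submodule.span D {b} * cont D f ^ (m + 1) := by
            refine le_trans (mul_le_mul_right hfg₁ _) (le_of_eq ?_)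
            rw [Submodule.mul_sup]
            congr 1
            rw [← mul_assoc, mul_comm (cont D f ^ m) (Submodule.span D {b}), mul_assoc,
              ← pow_succ]
          have hmem2 := hle2 hmem1
          rw [Submodule.mem_sup] at hmem2
          obtain ⟨y, hy, z, hz, hyz⟩ := hmem2
          have hrw : g.coeff t * f.coeff (i + (m + 1) - t) * x =
              f.coeff (i + (m + 1) - t) * y + f.coeff (i + (m + 1) - t) * z := by
            rw [← mul_add, hyz, hbt]; ring
          rw [hrw]
          refine add_mem ?_ ?_
          · have hm : f.coeff (i + (m + 1) - t) * y ∈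
                cont D f * (cont D f ^ m * cont D (f * g)) :=
              Submodule.mul_mem_mul (coeff_mem_cont _ _) hy
            rwa [← mul_assoc, ← pow_succ'] at hm
          · refine mul_mem_of_span_singleton_mul (fun x' hx' => ?_) z hz
            exact ihd (i + (m + 1) - t) (by omega) x' hx'
    -- assembling the inductive step
    have part1 : Submodule.span D {b} * cont D f ^ (m + 2) ≤
        cont D f ^ (m + 1) * cont D (f * g) := by
      apply span_singleton_mul_le
      intro z hz
      rw [pow_succ'] at hz
      refine Submodule.mul_induction_on hz ?_ ?_
      · intro w hw x hx
        induction hw using Submodule.span_induction with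
        | mem w hws =>
          obtain ⟨i, rfl⟩ := hws
          rw [show b * (f.coeff i * x) = f.coeff i * (b * x) by ring]
          exact inner (n + 1) i (by omega) x hx
        | zero => rw [zero_mul, mul_zero]; exact zero_mem _
        | add w₁ w₂ _ _ h1 h2 => rw [add_mul, mul_add]; exact add_mem h1 h2
        | smul r w _ h => rw [smul_mul_assoc, mul_smul_comm]; exact Submodule.smul_mem _ _ h
      · intro x y hx hy; rw [mul_add]; exact add_mem hx hy
    have hsplit : cont D g ≤ cont D g₁ ⊔ Submodule.span D {b} := by
      have hgid : g = g₁ + Polynomial.C b * Polynomial.X ^ (m + 1) := by rw [hg₁def]; ring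
      calc cont D g = cont D (g₁ + Polynomial.C b * Polynomial.X ^ (m + 1)) := by rw [← hgid]
        _ ≤ cont D g₁ ⊔ cont D (Polynomial.C b * Polynomial.X ^ (m + 1)) := cont_add_le _ _
        _ ≤ cont D g₁ ⊔ Submodule.span D {b} := sup_le_sup le_rfl (cont_C_mul_X_pow_le _ _)
    calc cont D f ^ (m + 1 + 1) * cont D g
        ≤ cont D f ^ (m + 2) * (cont D g₁ ⊔ Submodule.span D {b}) :=
          mul_right_mono hsplit
      _ = cont D f ^ (m + 2) * cont D g₁ ⊔ Submodule.span D {b} * cont D f ^ (m + 2) := by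
          rw [Submodule.mul_sup, mul_comm (cont D f ^ (m + 2)) (Submodule.span D {b})]
      _ ≤ cont D f ^ (m + 1) * cont D (f * g) := by
          refine sup_le ?_ part1
          have h1 : cont D f ^ (m + 2) * cont D g₁ ≤ cont D f ^ (m + 1) * cont D (f * g₁) := by
            have e : cont D f ^ (m + 2) * cont D g₁ =
                cont D f * (cont D f ^ (m + 1) * cont D g₁) := by
              rw [← mul_assoc, ← pow_succ']
            rw [e]
            refine le_trans (mul_le_mul_right ihg₁ _) (le_of_eq ?_)
            rw [← mul_assoc, ← pow_succ']
          refine le_trans h1 ?_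
          refine le_trans (mul_le_mul_right hfg₁ _) ?_
          rw [Submodule.mul_sup]
          refine sup_le le_rfl ?_
          have e2 : cont D f ^ (m + 1) * (Submodule.span D {b} * cont D f) =
              Submodule.span D {b} * cont D f ^ (m + 2) := by
            rw [← mul_assoc, mul_comm (cont D f ^ (m + 1)) (Submodule.span D {b}), mul_assoc,
              ← pow_succ]
          rw [e2]
          exact part1



lemma fi_add_mem {I : FractionalIdeal (nonZeroDivisors D) K} {x y : K}
    (hx : x ∈ I) (hy : y ∈ I) : x + y ∈ I := by
  rw [← FractionalIdeal.mem_coe] at hx hy ⊢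
  exact Submodule.add_mem _ hx hy

lemma fi_mul_ne_zero {I J : FractionalIdeal (nonZeroDivisors D) K} (hI : I ≠ 0) (hJ : J ≠ 0) :
    I * J ≠ 0 := by
  intro h
  obtain ⟨x, hxI, hx⟩ : ∃ x ∈ I, x ≠ (0 : K) := by
    by_contra hc
    push_neg at hc
    exact hI (FractionalIdeal.eq_zero_iff.mpr hc)
  obtain ⟨y, hyJ, hy⟩ : ∃ y ∈ J, y ≠ (0 : K) := by
    by_contra hc
    push_neg at hc
    exact hJ (FractionalIdeal.eq_zero_iff.mpr hc)
  have : x * y = 0 := FractionalIdeal.eq_zero_iff.mp h _ (FractionalIdeal.mul_mem_mul hxI hyJ)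
  exact (mul_ne_zero hx hy) this

lemma fi_pow_ne_zero {I : FractionalIdeal (nonZeroDivisors D) K} (hI : I ≠ 0) (k : ℕ) :
    I ^ k ≠ 0 := by
  induction k with
  | zero => rw [pow_zero]; exact one_ne_zero
  | succ k ih => rw [pow_succ]; exact fi_mul_ne_zero ih hI

lemma one_div_ne_zero_fi {I : FractionalIdeal (nonZeroDivisors D) K} (hI : I ≠ 0) :
    1 / I ≠ 0 := by
  obtain ⟨a, haS, ha⟩ := I.isFractional
  have ha0 : (a : D) ≠ 0 := nonZeroDivisors.ne_zero haS
  have hz : (algebraMap D K a) ≠ 0 := fun h =>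
    ha0 (IsFractionRing.to_map_eq_zero_iff.mp h)
  have hmem : algebraMap D K a ∈ 1 / I := by
    rw [FractionalIdeal.mem_div_iff_of_ne_zero hI]
    intro y hy
    obtain ⟨c, hc⟩ := ha y hy
    exact (FractionalIdeal.mem_one_iff _).mpr ⟨c, by rw [hc, Algebra.smul_def]⟩
  intro h
  exact hz (FractionalIdeal.eq_zero_iff.mp h _ hmem)

lemma one_div_antitone {I J : FractionalIdeal (nonZeroDivisors D) K} (hI : I ≠ 0) (h : I ≤ J) :
    1 / J ≤ 1 / I := by
  have hJ : J ≠ 0 := fun h0 => hI (le_antisymm (h0 ▸ h) (FractionalIdeal.zero_le _))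
  rw [← FractionalIdeal.coe_le_coe]
  intro x hx
  rw [FractionalIdeal.mem_coe] at hx ⊢
  rw [FractionalIdeal.mem_div_iff_of_ne_zero hI]
  intro y hy
  exact (FractionalIdeal.mem_div_iff_of_ne_zero hJ).mp hx y (h hy)

lemma vop_mono {I J : FractionalIdeal (nonZeroDivisors D) K} (hI : I ≠ 0) (h : I ≤ J) :
    vop I ≤ vop J := by
  have hJ : J ≠ 0 := fun h0 => hI (le_antisymm (h0 ▸ h) (FractionalIdeal.zero_le _))
  exact one_div_antitone (one_div_ne_zero_fi hJ) (one_div_antitone hI h)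

lemma le_vop {I : FractionalIdeal (nonZeroDivisors D) K} (hI : I ≠ 0) : I ≤ vop I := by
  rw [← FractionalIdeal.coe_le_coe]
  intro x hx
  rw [FractionalIdeal.mem_coe] at hx ⊢
  rw [vop, FractionalIdeal.mem_div_iff_of_ne_zero (one_div_ne_zero_fi hI)]
  intro y hy
  rw [mul_comm]
  exact (FractionalIdeal.mem_div_iff_of_ne_zero hI).mp hy x hx

lemma vop_mul_eq_of_one_div_eq_one {C B : FractionalIdeal (nonZeroDivisors D) K}
    (hC : 1 / C = 1) (hCne : C ≠ 0) (hB : B ≠ 0) : vop (C * B) = vop B := by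
  have hCB : C * B ≠ 0 := fi_mul_ne_zero hCne hB
  have hdiv : 1 / (C * B) = 1 / B := by
    ext x
    rw [FractionalIdeal.mem_div_iff_of_ne_zero hCB, FractionalIdeal.mem_div_iff_of_ne_zero hB]
    constructor
    · intro h y hy
      have hx1C : x * y ∈ 1 / C := by
        rw [FractionalIdeal.mem_div_iff_of_ne_zero hCne]
        intro c hc
        rw [show x * y * c = x * (c * y) by ring]
        exact h _ (FractionalIdeal.mul_mem_mul hc hy)
      rwa [hC] at hx1C
    · intro h y hy
      refine FractionalIdeal.mul_induction_on hy ?_ ?_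
      · intro c hc z hz
        have hxz : x * z ∈ 1 / C := by rw [hC]; exact h z hz
        have := (FractionalIdeal.mem_div_iff_of_ne_zero hCne).mp hxz c hc
        rwa [show x * (c * z) = x * z * c by ring]
      · intro z w hz hw
        rw [mul_add]
        exact fi_add_mem hz hw
  rw [vop, vop, hdiv]


lemma coe_contentFI (p : Polynomial K) : (contentFI D p : Submodule D K) = cont D p := by
  rw [contentFI, FractionalIdeal.spanFinset_coe]
  apply le_antisymm
  · rw [Submodule.span_le]
    rintro _ ⟨i, -, rfl⟩
    exact coeff_mem_cont p i
  · apply cont_le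
    intro i
    by_cases hi : i ≤ p.natDegree
    · exact Submodule.subset_span ⟨i, by simpa using by omega, rfl⟩
    · rw [Polynomial.coeff_eq_zero_of_natDegree_lt (by omega)]
      exact zero_mem _

lemma contentFI_ne_zero {p : Polynomial K} (hp : p ≠ 0) : contentFI D p ≠ 0 := by
  rw [contentFI]
  refine FractionalIdeal.spanFinset_ne_zero.mpr ⟨p.natDegree, ?_, ?_⟩
  · simp
  · simpa [Polynomial.coeff_natDegree] using Polynomial.leadingCoeff_ne_zero.mpr hp

lemma contentFI_mul_le (p q : Polynomial K) :
    contentFI D (p * q) ≤ contentFI D p * contentFI D q := by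
  rw [← FractionalIdeal.coe_le_coe, FractionalIdeal.coe_mul, coe_contentFI, coe_contentFI,
    coe_contentFI]
  exact cont_mul_le p q

lemma contentFI_dm (p q : Polynomial K) :
    contentFI D p ^ (q.natDegree + 1) * contentFI D q ≤
      contentFI D p ^ q.natDegree * contentFI D (p * q) := by
  rw [← FractionalIdeal.coe_le_coe, FractionalIdeal.coe_mul, FractionalIdeal.coe_mul,
    FractionalIdeal.coe_pow, FractionalIdeal.coe_pow, coe_contentFI, coe_contentFI,
    coe_contentFI]
  exact dm p q.natDegree q le_rfl

end DMaux

/-- If `c(f)` is `v`-invertible, then `(c(fg))^v = (c(f)·c(g))^v` for every nonzero `g`. -/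
theorem content_mul_v_eq_of_vInvertible (f : Polynomial K) (hf : f ≠ 0)
    (hinv : IsVInvertible (contentFI D f)) :
    ∀ g : Polynomial K, g ≠ 0 →
      vop (contentFI D (f * g)) = vop (contentFI D f * contentFI D g) := by
  intro g hg
  have hA : contentFI D f ≠ 0 := DMaux.contentFI_ne_zero hf
  have hB : contentFI D g ≠ 0 := DMaux.contentFI_ne_zero hg
  have hG : contentFI D (f * g) ≠ 0 := DMaux.contentFI_ne_zero (mul_ne_zero hf hg)
  set A := contentFI D f with hAdef
  set B := contentFI D g with hBdef
  set G := contentFI D (f * g) with hGdef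
  have hinv' : vop (A * (1 / A)) = 1 := hinv
  set C := A * (1 / A) with hCdef
  have hCne : C ≠ 0 := by
    intro h
    rw [h] at hinv'
    rw [vop, FractionalIdeal.div_zero, FractionalIdeal.div_zero] at hinv'
    exact zero_ne_one hinv'
  have h1Cne : 1 / C ≠ 0 := by
    intro h
    rw [vop, h, FractionalIdeal.div_zero] at hinv'
    exact zero_ne_one hinv'
  have hC1 : 1 / C = 1 := by
    apply le_antisymm
    · have hv : (1 : FractionalIdeal (nonZeroDivisors D) K) / (1 / C) = 1 := hinv'
      have h2 := DMaux.le_vop h1Cne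
      rw [vop, hv, FractionalIdeal.div_one] at h2
      exact h2
    · rw [FractionalIdeal.le_div_iff_of_ne_zero hCne]
      intro x hx y hy
      have hy1 : y ∈ (1 : FractionalIdeal (nonZeroDivisors D) K) :=
        FractionalIdeal.mul_one_div_le_one hy
      obtain ⟨x', rfl⟩ := (FractionalIdeal.mem_one_iff _).mp hx
      obtain ⟨y', rfl⟩ := (FractionalIdeal.mem_one_iff _).mp hy1
      exact (FractionalIdeal.mem_one_iff _).mpr ⟨x' * y', by rw [_root_.map_mul]⟩
  have hCk : ∀ (k : ℕ) (X : FractionalIdeal (nonZeroDivisors D) K), X ≠ 0 →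
      vop (C ^ k * X) = vop X := by
    intro k
    induction k with
    | zero => intro X hX; rw [pow_zero, one_mul]
    | succ k ih =>
      intro X hX
      have h1 : C ^ (k + 1) * X = C * (C ^ k * X) := by ring
      rw [h1, DMaux.vop_mul_eq_of_one_div_eq_one hC1 hCne
        (DMaux.fi_mul_ne_zero (DMaux.fi_pow_ne_zero hCne k) hX), ih X hX]
  have hABne : A * B ≠ 0 := DMaux.fi_mul_ne_zero hA hB
  have hle1 : vop G ≤ vop (A * B) := DMaux.vop_mono hG (DMaux.contentFI_mul_le f g)
  set m := g.natDegree with hm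
  have hdm : A ^ (m + 1) * B ≤ A ^ m * G := DMaux.contentFI_dm f g
  have hmul : (1 / A) ^ m * (A ^ (m + 1) * B) ≤ (1 / A) ^ m * (A ^ m * G) :=
    mul_right_mono hdm
  have e1 : (1 / A) ^ m * (A ^ (m + 1) * B) = C ^ m * (A * B) := by rw [hCdef]; ring
  have e2 : (1 / A) ^ m * (A ^ m * G) = C ^ m * G := by rw [hCdef]; ring
  have hle2 : vop (A * B) ≤ vop G := by
    calc vop (A * B) = vop (C ^ m * (A * B)) := (hCk m _ hABne).symm
      _ ≤ vop (C ^ m * G) := DMaux.vop_mono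
          (DMaux.fi_mul_ne_zero (DMaux.fi_pow_ne_zero hCne m) hABne)
          (by rw [← e1, ← e2]; exact hmul)
      _ = vop G := hCk m G hG
  exact le_antisymm hle1 hle2
end

section
/- Let D be an integral domain with quotient field K and X an indeterminate. The set N_D := {g ∈ D[X] | g ≠ 0 and (c_D(g))^v = D} is a saturated multiplicatively closed subset of D[X]. -/
open FractionalIdeal

set_option linter.unusedSectionVars false

variable {D K : Type*} [CommRing D] [IsDomain D] [Field K] [Algebra D K] [IsFractionRing D K]

variable (D) in
/-- The content ideal of a polynomial `g ∈ D[X]`. -/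
def contentIdeal (g : Polynomial D) : Ideal D := Ideal.span (Set.range g.coeff)

/-! ### Auxiliary lemmas on content ideals -/

theorem my_coeff_mem (p : Polynomial D) (i : ℕ) : p.coeff i ∈ contentIdeal D p :=
  Ideal.subset_span ⟨i, rfl⟩

theorem my_lead_mem (p : Polynomial D) : p.leadingCoeff ∈ contentIdeal D p :=
  my_coeff_mem p p.natDegree

theorem my_content_ne_bot {p : Polynomial D} (hp : p ≠ 0) : contentIdeal D p ≠ ⊥ := by
  intro h
  have := my_lead_mem p
  rw [h, Ideal.mem_bot] at this
  exact hp (Polynomial.leadingCoeff_eq_zero.mp this)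

theorem my_content_mul_le (p q : Polynomial D) :
    contentIdeal D (p * q) ≤ contentIdeal D p * contentIdeal D q := by
  rw [contentIdeal, Ideal.span_le]
  rintro x ⟨t, rfl⟩
  simp only [SetLike.mem_coe, Polynomial.coeff_mul]
  exact Ideal.sum_mem _ fun c _ =>
    Ideal.mul_mem_mul (my_coeff_mem p c.1) (my_coeff_mem q c.2)

/-- span of the coefficients of `g` of index `> j`. -/
def highCoeff (g : Polynomial D) (j : ℕ) : Ideal D :=
  Ideal.span {x | ∃ q, j < q ∧ x = g.coeff q}

theorem my_key_rel (f g : Polynomial D) (j : ℕ) :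
    f.leadingCoeff * g.coeff j ∈
      Ideal.span {(f * g).coeff (f.natDegree + j)} ⊔ contentIdeal D f * highCoeff g j := by
  classical
  have hmem : ((f.natDegree, j)) ∈ Finset.HasAntidiagonal.antidiagonal (f.natDegree + j) := by
    simp
  have hsum := Polynomial.coeff_mul f g (f.natDegree + j)
  rw [← Finset.add_sum_erase _ _ hmem] at hsum
  have h2 : f.leadingCoeff * g.coeff j
      = (f * g).coeff (f.natDegree + j)
        - ∑ x ∈ (Finset.HasAntidiagonal.antidiagonal (f.natDegree + j)).erase (f.natDegree, j),
            f.coeff x.1 * g.coeff x.2 := by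
    rw [hsum, Polynomial.leadingCoeff]; ring
  rw [h2]
  refine Submodule.sub_mem_sup (Ideal.mem_span_singleton_self _) ?_
  refine Ideal.sum_mem _ ?_
  intro x hx
  obtain ⟨hne, hmem'⟩ := Finset.mem_erase.mp hx
  have hadd : x.1 + x.2 = f.natDegree + j := Finset.HasAntidiagonal.mem_antidiagonal.mp hmem'
  rcases lt_trichotomy x.2 j with h | h | h
  · have : f.natDegree < x.1 := by omega
    rw [Polynomial.coeff_eq_zero_of_natDegree_lt this, zero_mul]
    exact zero_mem _
  · exfalso
    apply hne
    have : x.1 = f.natDegree := by omega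
    exact Prod.ext this h
  · exact Ideal.mul_mem_mul (my_coeff_mem f x.1) (Ideal.subset_span ⟨x.2, h, rfl⟩)

theorem my_lemma_L (f g : Polynomial D) :
    ∀ d j, g.natDegree ≤ j + d →
      f.leadingCoeff ^ (d + 1) * g.coeff j
        ∈ contentIdeal D f ^ d * contentIdeal D (f * g) := by
  intro d
  induction d using Nat.strong_induction_on with
  | _ d IH =>
    intro j hj
    obtain ⟨s, hs, w, hw, hsw⟩ := Submodule.mem_sup.mp (my_key_rel f g j)
    obtain ⟨t, ht⟩ := Ideal.mem_span_singleton'.mp hs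
    have hmain : f.leadingCoeff ^ (d + 1) * g.coeff j
        = f.leadingCoeff ^ d * s + f.leadingCoeff ^ d * w := by
      rw [← mul_add, hsw, pow_succ]; ring
    rw [hmain]
    refine add_mem ?_ ?_
    · rw [← ht]
      have heq : f.leadingCoeff ^ d * (t * (f * g).coeff (f.natDegree + j))
          = t * (f.leadingCoeff ^ d * (f * g).coeff (f.natDegree + j)) := by ring
      rw [heq]
      exact Ideal.mul_mem_left _ _
        (Ideal.mul_mem_mul (Ideal.pow_mem_pow (my_lead_mem f) d) (my_coeff_mem _ _))
    · rcases Nat.eq_zero_or_pos d with rfl | hd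
      · -- then highCoeff g j is trivial
        have hhigh : highCoeff g j ≤ ⊥ := by
          rw [highCoeff, Ideal.span_le]
          rintro x ⟨q, hq, rfl⟩
          have : g.natDegree < q := by omega
          simp [Polynomial.coeff_eq_zero_of_natDegree_lt this]
        have : w = 0 := by
          have hw' : w ∈ contentIdeal D f * (⊥ : Ideal D) :=
            (Ideal.mul_mono_right hhigh) hw
          rwa [Ideal.mul_bot, Ideal.mem_bot] at hw'
        rw [this, mul_zero]
        exact zero_mem _
      · obtain ⟨e, rfl⟩ : ∃ e, d = e + 1 := ⟨d - 1, by omega⟩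
        refine Submodule.mul_induction_on hw ?_ ?_
        · intro x hx y hy
          induction hy using Submodule.span_induction with
          | mem y hy =>
            obtain ⟨q, hq, rfl⟩ := hy
            have hq' : g.natDegree ≤ q + e := by omega
            have hIH := IH e (by omega) q hq'
            have heq : f.leadingCoeff ^ (e + 1) * (x * g.coeff q)
                = x * (f.leadingCoeff ^ (e + 1) * g.coeff q) := by ring
            rw [heq]
            have := Ideal.mul_mem_mul hx hIH
            have heq2 : contentIdeal D f * (contentIdeal D f ^ e * contentIdeal D (f * g))
                = contentIdeal D f ^ (e + 1) * contentIdeal D (f * g) := by ring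
            rwa [heq2] at this
          | zero => simp
          | add y z hy hz hy' hz' =>
            have : f.leadingCoeff ^ (e + 1) * (x * (y + z))
                = f.leadingCoeff ^ (e + 1) * (x * y) + f.leadingCoeff ^ (e + 1) * (x * z) := by
              ring
            rw [this]; exact add_mem hy' hz'
          | smul r y hy hy' =>
            have : f.leadingCoeff ^ (e + 1) * (x * (r • y))
                = r * (f.leadingCoeff ^ (e + 1) * (x * y)) := by
              rw [smul_eq_mul]; ring
            rw [this]
            exact Ideal.mul_mem_left _ _ hy'
        · intro x y hx hy
          rw [mul_add]
          exact add_mem hx hy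

theorem my_content_monomial_le (n : ℕ) (a : D) :
    contentIdeal D (Polynomial.monomial n a) ≤ Ideal.span {a} := by
  rw [contentIdeal, Ideal.span_le]
  rintro x ⟨i, rfl⟩
  rw [Polynomial.coeff_monomial]
  split
  · exact Ideal.mem_span_singleton_self a
  · exact zero_mem _

theorem my_lead_monomial_mem (n : ℕ) (a : D) :
    a ∈ contentIdeal D (Polynomial.monomial n a) := by
  have : (Polynomial.monomial n a).coeff n = a := by
    rw [Polynomial.coeff_monomial, if_pos rfl]
  have h2 := my_coeff_mem (Polynomial.monomial n a) n
  rwa [this] at h2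

theorem my_wdm_monomial (n : ℕ) (a : D) (g : Polynomial D) (N : ℕ) :
    contentIdeal D (Polynomial.monomial n a) ^ (N + 1) * contentIdeal D g
      ≤ contentIdeal D (Polynomial.monomial n a) ^ N
        * contentIdeal D (Polynomial.monomial n a * g) := by
  refine Ideal.mul_le.mpr ?_
  intro r hr s hs
  have hr' : r ∈ Ideal.span {a ^ (N + 1)} := by
    have := (Ideal.pow_right_mono (my_content_monomial_le n a) (N + 1)) hr
    rwa [Ideal.span_singleton_pow] at this
  obtain ⟨t, ht⟩ := Ideal.mem_span_singleton'.mp hr'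
  induction hs using Submodule.span_induction with
  | mem y hy =>
    obtain ⟨q, rfl⟩ := hy
    have hco : (Polynomial.monomial n a * g).coeff (q + n) = a * g.coeff q :=
      Polynomial.coeff_monomial_mul g n q a
    have heq : r * g.coeff q = t * (a ^ N * (Polynomial.monomial n a * g).coeff (q + n)) := by
      rw [hco, ← ht]; ring
    rw [heq]
    exact Ideal.mul_mem_left _ _
      (Ideal.mul_mem_mul (Ideal.pow_mem_pow (my_lead_monomial_mem n a) N) (my_coeff_mem _ _))
  | zero => simp
  | add y z hy hz hy' hz' => rw [mul_add]; exact add_mem hy' hz'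
  | smul c y hy hy' =>
    rw [smul_eq_mul, show r * (c * y) = c * (r * y) by ring]
    exact Ideal.mul_mem_left _ _ hy'

theorem my_content_eraseLead_le (f : Polynomial D) :
    contentIdeal D f.eraseLead ≤ contentIdeal D f := by
  rw [contentIdeal, Ideal.span_le]
  rintro x ⟨i, rfl⟩
  rw [Polynomial.eraseLead_coeff]
  split
  · exact zero_mem _
  · exact my_coeff_mem f i

theorem my_content_le_sup (f : Polynomial D) :
    contentIdeal D f ≤ Ideal.span {f.leadingCoeff} ⊔ contentIdeal D f.eraseLead := by
  rw [contentIdeal, Ideal.span_le]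
  rintro x ⟨i, rfl⟩
  by_cases h : i = f.natDegree
  · subst h
    exact Submodule.mem_sup_left (Ideal.mem_span_singleton_self _)
  · have : f.eraseLead.coeff i = f.coeff i := by
      rw [Polynomial.eraseLead_coeff]; simp [h]
    exact Submodule.mem_sup_right (this ▸ my_coeff_mem f.eraseLead i)

theorem my_content_eraseLead_mul_le (f g : Polynomial D) :
    contentIdeal D (f.eraseLead * g)
      ≤ contentIdeal D (f * g) ⊔ Ideal.span {f.leadingCoeff} * contentIdeal D g := by
  rw [contentIdeal, Ideal.span_le]
  rintro x ⟨i, rfl⟩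
  have hco : (f.eraseLead * g).coeff i
      = (f * g).coeff i - (Polynomial.monomial f.natDegree f.leadingCoeff * g).coeff i := by
    rw [← Polynomial.self_sub_monomial_natDegree_leadingCoeff f, sub_mul,
      Polynomial.coeff_sub]
  rw [hco]
  refine Submodule.sub_mem_sup (my_coeff_mem _ _) ?_
  have h1 : contentIdeal D (Polynomial.monomial f.natDegree f.leadingCoeff * g)
      ≤ Ideal.span {f.leadingCoeff} * contentIdeal D g :=
    (my_content_mul_le _ _).trans
      (Ideal.mul_mono_left (my_content_monomial_le _ _))
  exact h1 (my_coeff_mem _ _)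

/-- A weak form of the Dedekind–Mertens lemma: for some `k`,
`c(f)^(k+1) c(g) ⊆ c(f)^k c(fg)`. -/
theorem my_wdm : ∀ (N : ℕ) (f g : Polynomial D), f.natDegree ≤ N →
    ∃ k, contentIdeal D f ^ (k + 1) * contentIdeal D g
      ≤ contentIdeal D f ^ k * contentIdeal D (f * g) := by
  intro N
  induction N using Nat.strong_induction_on with
  | _ N IHN =>
  intro f g hfN
  rcases f.eraseLead_natDegree_lt_or_eraseLead_eq_zero with hlt | h0
  swap
  · -- f is a monomial
    have hf : f = Polynomial.monomial f.natDegree f.leadingCoeff := by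
      have := Polynomial.eraseLead_add_monomial_natDegree_leadingCoeff f
      rw [h0, zero_add] at this
      exact this.symm
    refine ⟨0, ?_⟩
    rw [hf] at *
    simpa using my_wdm_monomial f.natDegree f.leadingCoeff g 0
  · -- inductive step
    have hN : 0 < N := by omega
    obtain ⟨k₁, hk₁⟩ := IHN (N - 1) (by omega) f.eraseLead g (by omega)
    set m := g.natDegree with hm
    set a := f.leadingCoeff with ha
    set F1 := f.eraseLead with hF1
    set cf := contentIdeal D f with hcf
    set cF1 := contentIdeal D F1 with hcF1
    set cg := contentIdeal D g with hcg
    set ch := contentIdeal D (f * g) with hch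
    set k := k₁ + m with hk
    refine ⟨k, ?_⟩
    have hspan_le : Ideal.span {a} ≤ cf := by
      rw [Ideal.span_le]; simpa using my_lead_mem f
    have hF1_le : cF1 ≤ cf := my_content_eraseLead_le f
    -- iterated induction hypothesis
    have hIH' : ∀ s : ℕ, cF1 ^ (k₁ + 1 + s) * cg ≤ cF1 ^ (k₁ + s) * contentIdeal D (F1 * g) := by
      intro s
      calc cF1 ^ (k₁ + 1 + s) * cg = cF1 ^ s * (cF1 ^ (k₁ + 1) * cg) := by ring
        _ ≤ cF1 ^ s * (cF1 ^ k₁ * contentIdeal D (F1 * g)) := Ideal.mul_mono_right hk₁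
        _ = cF1 ^ (k₁ + s) * contentIdeal D (F1 * g) := by ring
    -- the L-lemma in ideal form
    have hL' : ∀ e : ℕ, m ≤ e → ∀ y ∈ cg, a ^ (e + 1) * y ∈ cf ^ e * ch := by
      intro e he y hy
      induction hy using Submodule.span_induction with
      | mem y hy =>
        obtain ⟨q, rfl⟩ := hy
        exact my_lemma_L f g e q (by omega)
      | zero => simp
      | add y z hy hz hy' hz' => rw [mul_add]; exact add_mem hy' hz'
      | smul c y hy hy' =>
        rw [smul_eq_mul, show a ^ (e + 1) * (c * y) = c * (a ^ (e + 1) * y) by ring]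
        exact Ideal.mul_mem_left _ _ hy'
    -- terms with at least m+1 factors a
    have hUbig : ∀ r, m + 1 ≤ r → r ≤ k + 1 →
        Ideal.span {a} ^ r * cF1 ^ (k + 1 - r) * cg ≤ cf ^ k * ch := by
      intro r hr1 hr2
      obtain ⟨e, rfl⟩ : ∃ e, r = m + 1 + e := ⟨r - (m + 1), by omega⟩
      refine Ideal.mul_le.mpr ?_
      intro x hx y hy
      refine Submodule.mul_induction_on hx ?_ ?_
      · intro u hu v hv
        rw [Ideal.span_singleton_pow] at hu
        obtain ⟨t, ht⟩ := Ideal.mem_span_singleton'.mp hu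
        have h1 : a ^ (m + 1) * y ∈ cf ^ m * ch := hL' m le_rfl y hy
        have hv' : v ∈ cf ^ (k + 1 - (m + 1 + e)) := Ideal.pow_right_mono hF1_le _ hv
        have h2 : a ^ e * v ∈ cf ^ e * cf ^ (k + 1 - (m + 1 + e)) :=
          Ideal.mul_mem_mul (Ideal.pow_mem_pow (my_lead_mem f) e) hv'
        have h3 := Ideal.mul_mem_mul h2 h1
        have hexp : e + (k + 1 - (m + 1 + e)) + m = k := by omega
        have heq : cf ^ e * cf ^ (k + 1 - (m + 1 + e)) * (cf ^ m * ch)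
            = cf ^ (e + (k + 1 - (m + 1 + e)) + m) * ch := by ring
        rw [heq, hexp] at h3
        have helt : u * v * y = t * (a ^ e * v * (a ^ (m + 1) * y)) := by
          rw [← ht]; ring
        rw [helt]
        exact Ideal.mul_mem_left _ _ h3
      · intro x₁ x₂ hx₁ hx₂
        rw [add_mul]
        exact add_mem hx₁ hx₂
    -- the descending induction
    have hU : ∀ t r, r + t = m + 1 →
        Ideal.span {a} ^ r * cF1 ^ (k + 1 - r) * cg ≤ cf ^ k * ch := by
      intro t
      induction t with
      | zero =>
        intro r hr
        exact hUbig r (by omega) (by omega)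
      | succ t IHt =>
        intro r hr
        have hrm : r ≤ m := by omega
        have hs : k + 1 - r = k₁ + 1 + (m - r) := by omega
        have hs' : k + 1 - (r + 1) = k₁ + (m - r) := by omega
        calc Ideal.span {a} ^ r * cF1 ^ (k + 1 - r) * cg
            = Ideal.span {a} ^ r * (cF1 ^ (k₁ + 1 + (m - r)) * cg) := by rw [hs]; ring
          _ ≤ Ideal.span {a} ^ r * (cF1 ^ (k₁ + (m - r)) * contentIdeal D (F1 * g)) :=
              Ideal.mul_mono_right (hIH' (m - r))
          _ ≤ Ideal.span {a} ^ r * (cF1 ^ (k₁ + (m - r)) * (ch ⊔ Ideal.span {a} * cg)) :=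
              Ideal.mul_mono_right (Ideal.mul_mono_right (my_content_eraseLead_mul_le f g))
          _ = Ideal.span {a} ^ r * cF1 ^ (k₁ + (m - r)) * ch
              ⊔ Ideal.span {a} ^ (r + 1) * cF1 ^ (k₁ + (m - r)) * cg := by
              rw [Ideal.mul_sup, Ideal.mul_sup]
              congr 1
              · ring
              · ring
          _ ≤ cf ^ k * ch := by
              refine sup_le ?_ ?_
              · have h1 : Ideal.span {a} ^ r * cF1 ^ (k₁ + (m - r)) ≤ cf ^ r * cf ^ (k₁ + (m - r)) :=
                  Ideal.mul_mono (Ideal.pow_right_mono hspan_le r) (Ideal.pow_right_mono hF1_le _)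
                have h2 : cf ^ r * cf ^ (k₁ + (m - r)) = cf ^ k := by
                  rw [← pow_add]
                  congr 1
                  omega
                calc Ideal.span {a} ^ r * cF1 ^ (k₁ + (m - r)) * ch
                    ≤ cf ^ r * cf ^ (k₁ + (m - r)) * ch := Ideal.mul_mono_left h1
                  _ = cf ^ k * ch := by rw [h2]
              · have := IHt (r + 1) (by omega)
                rwa [hs'] at this
    -- put everything together via the binomial theorem
    calc cf ^ (k + 1) * cg
        ≤ (Ideal.span {a} ⊔ cF1) ^ (k + 1) * cg :=
          Ideal.mul_mono_left (Ideal.pow_right_mono (my_content_le_sup f) _)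
      _ ≤ cf ^ k * ch := by
          rw [← Ideal.add_eq_sup, add_pow, Finset.sum_mul, Ideal.sum_eq_sup]
          refine Finset.sup_le ?_
          intro r hr
          have hr' : r ≤ k + 1 := by
            simpa [Nat.lt_succ_iff] using Finset.mem_range.mp hr
          have hdrop : Ideal.span {a} ^ r * cF1 ^ (k + 1 - r) * (Nat.choose (k+1) r : Ideal D) * cg
              ≤ Ideal.span {a} ^ r * cF1 ^ (k + 1 - r) * cg :=
            Ideal.mul_mono_left Ideal.mul_le_left
          refine hdrop.trans ?_
          rcases le_or_gt r (m + 1) with hcase | hcase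
          · exact hU (m + 1 - r) r (by omega)
          · exact hUbig r (by omega) hr'

/-! ### Fractional ideal lemmas -/

theorem my_one_le_one_div {A : FractionalIdeal (nonZeroDivisors D) K}
    (hA0 : A ≠ 0) (hA1 : A ≤ 1) : 1 ≤ 1 / A :=
  (le_div_iff_mul_le hA0).mpr (by rwa [one_mul])

theorem my_div_mul_le {A : FractionalIdeal (nonZeroDivisors D) K} (hA0 : A ≠ 0) :
    1 / A * A ≤ 1 :=
  (le_div_iff_mul_le hA0).mp le_rfl

theorem my_vop_iff {A : FractionalIdeal (nonZeroDivisors D) K}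
    (hA0 : A ≠ 0) (hA1 : A ≤ 1) : vop A = 1 ↔ 1 / A = 1 := by
  constructor
  · intro h
    refine le_antisymm ?_ (my_one_le_one_div hA0 hA1)
    have hB0 : (1 / A : FractionalIdeal (nonZeroDivisors D) K) ≠ 0 := by
      intro hc
      have := my_one_le_one_div hA0 hA1
      rw [hc] at this
      exact one_ne_zero (le_antisymm this (zero_le _))
    have hvop0 : (1 / (1 / A) : FractionalIdeal (nonZeroDivisors D) K) ≠ 0 := by
      have : (1 / (1 / A) : FractionalIdeal (nonZeroDivisors D) K) = vop A := rfl
      rw [this, h]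
      exact one_ne_zero
    have hle : 1 / A ≤ 1 / (1 / (1 / A)) := by
      refine (le_div_iff_mul_le hvop0).mpr ?_
      calc (1 / A) * (1 / (1 / A)) = (1 / (1 / A)) * (1 / A) := mul_comm _ _
        _ ≤ 1 := my_div_mul_le hB0
    have hvop : (1 / (1 / A) : FractionalIdeal (nonZeroDivisors D) K) = vop A := rfl
    rwa [hvop, h, FractionalIdeal.div_one] at hle
  · intro h
    show 1 / (1 / A) = 1
    rw [h, FractionalIdeal.div_one]

theorem my_pow_le_one {A : FractionalIdeal (nonZeroDivisors D) K} (hA : A ≤ 1) :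
    ∀ t : ℕ, A ^ t ≤ 1 := by
  intro t
  induction t with
  | zero => rw [pow_zero]
  | succ t IH =>
    calc A ^ (t + 1) = A ^ t * A := pow_succ A t
      _ ≤ A ^ t * 1 := mul_right_mono hA
      _ = A ^ t := mul_one _
      _ ≤ 1 := IH

theorem my_peel {F P : FractionalIdeal (nonZeroDivisors D) K}
    (hF0 : F ≠ 0) (hF : 1 / F = 1) : ∀ t : ℕ, P * F ^ t ≤ 1 → P ≤ 1 := by
  intro t
  induction t with
  | zero => intro h; rwa [pow_zero, mul_one] at h
  | succ t IH =>
    intro h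
    apply IH
    have h' : P * F ^ t * F ≤ 1 := by
      rwa [pow_succ, ← mul_assoc] at h
    have := (le_div_iff_mul_le hF0).mpr h'
    rwa [hF] at this

/-- The set `N_D = {g ∈ D[X] | g ≠ 0, c_D(g)^v = D}` is a saturated multiplicatively
closed subset of `D[X]`. -/
theorem nagata_set_saturated_multiplicative :
    (1 : Polynomial D) ∈ {g : Polynomial D | g ≠ 0 ∧
        vop ((contentIdeal D g : Ideal D) : FractionalIdeal (nonZeroDivisors D) K) = 1} ∧
    (∀ a b : Polynomial D,
      a ∈ {g : Polynomial D | g ≠ 0 ∧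
        vop ((contentIdeal D g : Ideal D) : FractionalIdeal (nonZeroDivisors D) K) = 1} →
      b ∈ {g : Polynomial D | g ≠ 0 ∧
        vop ((contentIdeal D g : Ideal D) : FractionalIdeal (nonZeroDivisors D) K) = 1} →
      a * b ∈ {g : Polynomial D | g ≠ 0 ∧
        vop ((contentIdeal D g : Ideal D) : FractionalIdeal (nonZeroDivisors D) K) = 1}) ∧
    (∀ a b : Polynomial D,
      a * b ∈ {g : Polynomial D | g ≠ 0 ∧
        vop ((contentIdeal D g : Ideal D) : FractionalIdeal (nonZeroDivisors D) K) = 1} →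
      a ∈ {g : Polynomial D | g ≠ 0 ∧
        vop ((contentIdeal D g : Ideal D) : FractionalIdeal (nonZeroDivisors D) K) = 1} ∧
      b ∈ {g : Polynomial D | g ≠ 0 ∧
        vop ((contentIdeal D g : Ideal D) : FractionalIdeal (nonZeroDivisors D) K) = 1}) := by
  have hcoe0 : ∀ {p : Polynomial D}, p ≠ 0 →
      ((contentIdeal D p : Ideal D) : FractionalIdeal (nonZeroDivisors D) K) ≠ 0 := by
    intro p hp
    rw [coeIdeal_ne_zero]
    exact my_content_ne_bot hp
  refine ⟨⟨one_ne_zero, ?_⟩, ?_, ?_⟩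
  · -- 1 ∈ N
    have h1 : contentIdeal D (1 : Polynomial D) = ⊤ := by
      rw [Ideal.eq_top_iff_one]
      have := my_coeff_mem (1 : Polynomial D) 0
      simpa using this
    rw [h1, coeIdeal_top]
    show (1 : FractionalIdeal (nonZeroDivisors D) K) / (1 / 1) = 1
    rw [FractionalIdeal.div_one, FractionalIdeal.div_one]
  · -- multiplicatively closed
    rintro f g ⟨hf0, hfv⟩ ⟨hg0, hgv⟩
    have hfg0 : f * g ≠ 0 := mul_ne_zero hf0 hg0
    refine ⟨hfg0, ?_⟩
    set F : FractionalIdeal (nonZeroDivisors D) K := ((contentIdeal D f : Ideal D) : FractionalIdeal (nonZeroDivisors D) K)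
    set G : FractionalIdeal (nonZeroDivisors D) K := ((contentIdeal D g : Ideal D) : FractionalIdeal (nonZeroDivisors D) K)
    set H : FractionalIdeal (nonZeroDivisors D) K := ((contentIdeal D (f * g) : Ideal D) : FractionalIdeal (nonZeroDivisors D) K)
    have hF0 : F ≠ 0 := hcoe0 hf0
    have hG0 : G ≠ 0 := hcoe0 hg0
    have hH0 : H ≠ 0 := hcoe0 hfg0
    have hF1 : F ≤ 1 := coeIdeal_le_one
    have hG1 : G ≤ 1 := coeIdeal_le_one
    have hH1 : H ≤ 1 := coeIdeal_le_one
    have hfd : 1 / F = 1 := (my_vop_iff hF0 hF1).mp hfv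
    have hgd : 1 / G = 1 := (my_vop_iff hG0 hG1).mp hgv
    rw [my_vop_iff hH0 hH1]
    refine le_antisymm ?_ (my_one_le_one_div hH0 hH1)
    obtain ⟨k, hk⟩ := my_wdm f.natDegree f g le_rfl
    have hkK : F ^ (k + 1) * G ≤ F ^ k * H := by
      have h := (coeIdeal_le_coeIdeal K).mpr hk
      rwa [coeIdeal_mul, coeIdeal_mul, coeIdeal_pow, coeIdeal_pow] at h
    have key : (1 / H) * F ^ (k + 1) * G ≤ 1 := by
      calc (1 / H) * F ^ (k + 1) * G = (1 / H) * (F ^ (k + 1) * G) := mul_assoc _ _ _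
        _ ≤ (1 / H) * (F ^ k * H) := mul_right_mono hkK
        _ = F ^ k * ((1 / H) * H) := by ring
        _ ≤ F ^ k * 1 := mul_right_mono (my_div_mul_le hH0)
        _ = F ^ k := mul_one _
        _ ≤ 1 := my_pow_le_one hF1 k
    have key2 : (1 / H) * F ^ (k + 1) ≤ 1 / G := (le_div_iff_mul_le hG0).mpr key
    rw [hgd] at key2
    exact my_peel hF0 hfd (k + 1) key2
  · -- saturated
    have main : ∀ p q : Polynomial D, p * q ≠ 0 →
        vop ((contentIdeal D (p * q) : Ideal D) : FractionalIdeal (nonZeroDivisors D) K) = 1 →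
        vop ((contentIdeal D p : Ideal D) : FractionalIdeal (nonZeroDivisors D) K) = 1 := by
      intro p q hpq hv
      have hp0 : p ≠ 0 := fun h => hpq (by rw [h, zero_mul])
      set A : FractionalIdeal (nonZeroDivisors D) K := ((contentIdeal D p : Ideal D) : FractionalIdeal (nonZeroDivisors D) K) with hA
      set Hpq : FractionalIdeal (nonZeroDivisors D) K :=
        ((contentIdeal D (p * q) : Ideal D) : FractionalIdeal (nonZeroDivisors D) K) with hHpq
      have hA0 : A ≠ 0 := hcoe0 hp0
      have hHpq0 : Hpq ≠ 0 := hcoe0 hpq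
      have h1 : 1 / Hpq = 1 := (my_vop_iff hHpq0 coeIdeal_le_one).mp hv
      rw [my_vop_iff hA0 coeIdeal_le_one]
      refine le_antisymm ?_ (my_one_le_one_div hA0 coeIdeal_le_one)
      have hsub : contentIdeal D (p * q) ≤ contentIdeal D p :=
        (my_content_mul_le p q).trans Ideal.mul_le_left
      have hsub' : Hpq ≤ A := (coeIdeal_le_coeIdeal K).mpr hsub
      have h2 : (1 / A) * Hpq ≤ 1 :=
        calc (1 / A) * Hpq ≤ (1 / A) * A := mul_right_mono hsub'
          _ ≤ 1 := my_div_mul_le hA0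
      have h3 := (le_div_iff_mul_le hHpq0).mpr h2
      rwa [h1] at h3
    rintro f g ⟨hfg0, hv⟩
    have hf0 : f ≠ 0 := fun h => hfg0 (by rw [h, zero_mul])
    have hg0 : g ≠ 0 := fun h => hfg0 (by rw [h, mul_zero])
    refine ⟨⟨hf0, main f g hfg0 hv⟩, ⟨hg0, main g f (by rwa [mul_comm]) ?_⟩⟩
    rwa [mul_comm] at hv
end

section
/- Let D be a Mori domain, i.e., D satisfies the ascending chain condition on integral divisorial ideals (equivalently, for every nonzero integral ideal I there is a finitely generated ideal J ⊆ I with J^v = I^v). Then D is completely integrally closed if and only if D is a v-domain. -/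
open FractionalIdeal

variable {D K : Type*} [CommRing D] [IsDomain D] [Field K] [Algebra D K] [IsFractionRing D K]

private lemma exists_ne_zero_mem' {A : FractionalIdeal (nonZeroDivisors D) K} (hA : A ≠ 0) :
    ∃ x ∈ A, x ≠ 0 := by
  by_contra h
  push_neg at h
  exact hA (eq_zero_iff.mpr h)

private lemma one_div_ne_zero' {A : FractionalIdeal (nonZeroDivisors D) K} (hA : A ≠ 0) :
    (1 / A : FractionalIdeal (nonZeroDivisors D) K) ≠ 0 := by
  obtain ⟨a, haS, ha⟩ := A.isFractional
  have hmem : algebraMap D K a ∈ (1 / A : FractionalIdeal (nonZeroDivisors D) K) := by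
    rw [mem_div_iff_of_ne_zero hA]
    intro y hy
    obtain ⟨d, hd⟩ := ha y hy
    rw [(mem_one_iff _)]
    exact ⟨d, by rw [hd, Algebra.smul_def]⟩
  intro h
  rw [h, mem_zero_iff] at hmem
  exact IsFractionRing.to_map_ne_zero_of_mem_nonZeroDivisors haS hmem

private lemma mul_ne_zero' {A B : FractionalIdeal (nonZeroDivisors D) K} (hA : A ≠ 0)
    (hB : B ≠ 0) : A * B ≠ 0 := by
  obtain ⟨x, hx, hx0⟩ := exists_ne_zero_mem' hA
  obtain ⟨y, hy, hy0⟩ := exists_ne_zero_mem' hB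
  intro h
  have : x * y ∈ A * B := mul_mem_mul hx hy
  rw [h, mem_zero_iff] at this
  exact mul_ne_zero hx0 hy0 this

/-- `A ≤ A^v` for nonzero `A`. -/
private lemma le_vop' {A : FractionalIdeal (nonZeroDivisors D) K} (hA : A ≠ 0) : A ≤ vop A := by
  rw [vop, le_div_iff_mul_le (one_div_ne_zero' hA), mul_comm]
  exact (le_div_iff_mul_le hA).mp le_rfl

/-- `A^v * A⁻¹ ≤ 1` for nonzero `A`. -/
private lemma vop_mul_inv_le_one' {A : FractionalIdeal (nonZeroDivisors D) K} (hA : A ≠ 0) :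
    vop A * (1 / A) ≤ 1 := by
  rw [vop]
  exact (le_div_iff_mul_le (one_div_ne_zero' hA)).mp le_rfl

/-- In a Mori domain, completely integrally closed is equivalent to being a `v`-domain. -/
theorem mori_cic_iff_vDomain
    (hMori : ∀ I : Ideal D, I ≠ ⊥ → ∃ J : Ideal D, J.FG ∧ J ≤ I ∧
      vop ((J : Ideal D) : FractionalIdeal (nonZeroDivisors D) K) =
        vop ((I : Ideal D) : FractionalIdeal (nonZeroDivisors D) K)) :
    (∀ z : K, (∃ a : D, a ≠ 0 ∧ ∀ n : ℕ, ∃ d : D,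
        algebraMap D K a * z ^ n = algebraMap D K d) → ∃ d : D, algebraMap D K d = z) ↔
      (∀ F : FractionalIdeal (nonZeroDivisors D) K, F ≠ 0 → (F : Submodule D K).FG →
        IsVInvertible F) := by
  constructor
  · -- CIC → v-domain (doesn't use Mori)
    intro hC F hF _
    have hFinv : (1 / F : FractionalIdeal (nonZeroDivisors D) K) ≠ 0 := one_div_ne_zero' hF
    have hB : F * (1 / F) ≠ 0 := mul_ne_zero' hF hFinv
    have hdiv : (1 : FractionalIdeal (nonZeroDivisors D) K) / (F * (1 / F)) = 1 := by
      apply le_antisymm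
      · -- every element of (F*(1/F))⁻¹ is almost integral
        intro x hx'
        have hx : ∀ y ∈ F * (1 / F), x * y ∈ (1 : FractionalIdeal (nonZeroDivisors D) K) := by
          have : x ∈ (1 / (F * (1 / F)) : FractionalIdeal (nonZeroDivisors D) K) := hx'
          rwa [mem_div_iff_of_ne_zero hB] at this
        show x ∈ (1 : FractionalIdeal (nonZeroDivisors D) K)
        obtain ⟨b, hb, hb0⟩ := exists_ne_zero_mem' hFinv
        obtain ⟨c, hcS, hc⟩ := (1 / F : FractionalIdeal (nonZeroDivisors D) K).isFractional
        -- x^n * b ∈ 1/F for all n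
        have key : ∀ n : ℕ, x ^ n * b ∈ (1 / F : FractionalIdeal (nonZeroDivisors D) K) := by
          intro n
          induction n with
          | zero => simpa using hb
          | succ n ih =>
            rw [mem_div_iff_of_ne_zero hF]
            intro u hu
            have h2 := hx _ (mul_mem_mul hu ih)
            rw [mem_one_iff] at h2 ⊢
            obtain ⟨e, he⟩ := h2
            refine ⟨e, ?_⟩
            rw [he, pow_succ]
            ring
        obtain ⟨a, ha⟩ := hc b hb
        have ha0 : a ≠ 0 := by
          intro h0
          apply mul_ne_zero (IsFractionRing.to_map_ne_zero_of_mem_nonZeroDivisors hcS) hb0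
          rw [← Algebra.smul_def, ← ha, h0]
          exact _root_.map_zero _
        obtain ⟨d, hd⟩ := hC x ⟨a, ha0, fun n => by
          obtain ⟨e, he⟩ := hc _ (key n)
          refine ⟨e, ?_⟩
          rw [he, ha, Algebra.smul_def, Algebra.smul_def]
          ring⟩
        rw [mem_one_iff]
        exact ⟨d, hd⟩
      · rw [le_div_iff_mul_le hB, one_mul, mul_comm]
        exact (le_div_iff_mul_le hF).mp le_rfl
    show (1 : FractionalIdeal (nonZeroDivisors D) K) / (1 / (F * (1 / F))) = 1
    rw [hdiv, FractionalIdeal.div_one]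
  · -- v-domain + Mori → CIC
    intro hV z hz
    obtain ⟨a, ha0, hn⟩ := hz
    choose f hf using hn
    set I : Ideal D := Ideal.span (Set.range f) with hI
    have hf0 : f 0 = a := by
      have := hf 0
      rw [pow_zero, mul_one] at this
      exact (IsFractionRing.injective D K this).symm
    have hIbot : I ≠ ⊥ := by
      intro h
      have : f 0 ∈ I := Ideal.subset_span ⟨0, rfl⟩
      rw [h, Ideal.mem_bot, hf0] at this
      exact ha0 this
    set If : FractionalIdeal (nonZeroDivisors D) K := (I : FractionalIdeal (nonZeroDivisors D) K)
    have hIf : If ≠ 0 := (coeIdeal_ne_zero).mpr hIbot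
    -- z • I ⊆ I
    have hzI : spanSingleton (nonZeroDivisors D) z * If ≤ If := by
      rw [mul_le]
      intro i hi j hj
      obtain ⟨ci, hci⟩ := (mem_spanSingleton _).mp hi
      obtain ⟨w, hw, rfl⟩ := (mem_coeIdeal _).mp hj
      rw [← hci, smul_mul_assoc]
      refine Submodule.smul_mem _ _ ?_
      -- z * algebraMap w ∈ If for w ∈ I
      clear hci hi i hj
      induction hw using Submodule.span_induction with
      | mem w hw =>
        obtain ⟨n, rfl⟩ := hw
        have : z * algebraMap D K (f n) = algebraMap D K (f (n + 1)) := by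
          rw [← hf n, ← hf (n + 1), pow_succ]; ring
        rw [this]
        exact (mem_coeIdeal _).mpr ⟨f (n + 1), Ideal.subset_span ⟨n + 1, rfl⟩, rfl⟩
      | zero => simp
      | add u v _ _ hu hv => rw [_root_.map_add, mul_add]; exact Submodule.add_mem _ hu hv
      | smul c u _ hu =>
        have hrw : z * algebraMap D K (c • u) = c • (z * algebraMap D K u) := by
          rw [smul_eq_mul, _root_.map_mul, Algebra.smul_def]; ring
        rw [hrw]
        exact Submodule.smul_mem _ _ hu
    obtain ⟨J, hJfg, hJI, hJv⟩ := hMori I hIbot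
    set Jf : FractionalIdeal (nonZeroDivisors D) K := (J : FractionalIdeal (nonZeroDivisors D) K)
      with hJfdef
    rw [show ((I : Ideal D) : FractionalIdeal (nonZeroDivisors D) K) = If from rfl] at hJv
    have hJf : Jf ≠ 0 := by
      intro h
      have h0 : vop If = 0 := by
        rw [← hJv, h, vop, FractionalIdeal.div_zero, FractionalIdeal.div_zero]
      exact hIf (FractionalIdeal.le_zero_iff.mp (h0 ▸ le_vop' hIf))
    have hJffg : (Jf : Submodule D K).FG := by
      rw [coe_coeIdeal]
      exact Submodule.FG.map _ hJfg
    have hVJ : vop (Jf * (1 / Jf)) = 1 := hV Jf hJf hJffg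
    have hJinv : (1 / Jf : FractionalIdeal (nonZeroDivisors D) K) ≠ 0 := one_div_ne_zero' hJf
    have hBne : Jf * (1 / Jf) ≠ 0 := mul_ne_zero' hJf hJinv
    -- z * Jf ≤ vop Jf
    have hzJ : spanSingleton (nonZeroDivisors D) z * Jf ≤ vop Jf := by
      calc spanSingleton (nonZeroDivisors D) z * Jf
          ≤ spanSingleton (nonZeroDivisors D) z * If :=
            mul_le_mul_right (coeIdeal_le_coeIdeal K |>.mpr hJI) _
        _ ≤ If := hzI
        _ ≤ vop If := le_vop' hIf
        _ = vop Jf := hJv.symm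
    -- z ∈ 1 / (Jf * (1/Jf))
    have hz1 : spanSingleton (nonZeroDivisors D) z ≤ 1 / (Jf * (1 / Jf)) := by
      rw [le_div_iff_mul_le hBne, ← mul_assoc]
      calc spanSingleton (nonZeroDivisors D) z * Jf * (1 / Jf)
          ≤ vop Jf * (1 / Jf) := mul_le_mul_left hzJ _
        _ ≤ 1 := vop_mul_inv_le_one' hJf
    -- 1 / (Jf * (1/Jf)) ≤ 1 since vop (Jf * (1/Jf)) = 1
    have hfin : (1 / (Jf * (1 / Jf)) : FractionalIdeal (nonZeroDivisors D) K) ≤ 1 := by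
      have h1 : (1 / (Jf * (1 / Jf)) : FractionalIdeal (nonZeroDivisors D) K)
          ≤ vop (1 / (Jf * (1 / Jf))) := le_vop' (one_div_ne_zero' hBne)
      have h2 : vop (1 / (Jf * (1 / Jf)) : FractionalIdeal (nonZeroDivisors D) K) = 1 := by
        rw [vop] at hVJ ⊢
        rw [hVJ, FractionalIdeal.div_one]
      rwa [h2] at h1
    have : z ∈ (1 : FractionalIdeal (nonZeroDivisors D) K) :=
      hfin (hz1 (mem_spanSingleton_self _ z))
    exact (mem_one_iff _).mp this
end
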